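/- arXiv:2212.14259 — 5 statements merged into one kernel-verified Lean document; each statement's English description precedes it below -/
import Mathlib

section
/- Let 𝒳 be a convex subset of L⁰_c and 𝒞 ⊂ 𝒳 a non-empty 𝒫-sensitive set with reduction set 𝒬 ⊂ 𝔓_c(Ω). For Q ∈ 𝒬 put 𝒳_Q := j_Q(𝒳) and 𝒞_Q := j_Q(𝒞), let 𝒴_Q be a non-empty set of maps l : 𝒳_Q → ℝ ∪ {−∞,∞}, and define 𝒞°_Q := {l ∈ 𝒴_Q : l(X) ≤ 1 for all X ∈ 𝒞_Q} and 𝒞°°_Q := {X ∈ 𝒳_Q : l(X) ≤ 1 for all l ∈ 𝒞°_Q}. Set 𝒞° := ⋃_{Q∈𝒬} {l ∘ j_Q : l ∈ 𝒞°_Q} and 𝒞°° := {X ∈ 𝒳 : h(X) ≤ 1 for all h ∈ 𝒞°}. If 𝒞_Q = 𝒞°°_Q for all Q ∈ 𝒬, then 𝒞 = 𝒞°°. -/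
open MeasureTheory Filter Set
open scoped ENNReal

namespace Robust

variable {Ω : Type*} [MeasurableSpace Ω]

/-- `Q` vanishes on every `𝔓`-polar set, i.e. `Q ≪ 𝔓`. -/
def AC (𝔓 : Set (Measure Ω)) (Q : Measure Ω) : Prop :=
  ∀ N : Set Ω, MeasurableSet N → (∀ P ∈ 𝔓, P N = 0) → Q N = 0

/-- `𝔓_c(Ω)`: probability measures vanishing on all `𝔓`-polar sets. -/
def PC (𝔓 : Set (Measure Ω)) : Set (Measure Ω) :=
  {Q | IsProbabilityMeasure Q ∧ AC 𝔓 Q}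

/-- `𝔓`-quasi-sure equality of random variables. -/
def QSEq (𝔓 : Set (Measure Ω)) (f g : Ω → ℝ) : Prop := ∀ P ∈ 𝔓, f =ᵐ[P] g

/-- The `𝔓`-quasi-sure order. -/
def QSLe (𝔓 : Set (Measure Ω)) (f g : Ω → ℝ) : Prop := ∀ P ∈ 𝔓, f ≤ᵐ[P] g

/-- Representatives of elements of `L⁰`: the measurable functions. -/
def L0 (Ω : Type*) [MeasurableSpace Ω] : Set (Ω → ℝ) := {f | Measurable f}

/-- Representatives of elements of the positive cone `L⁰_{c+}`. -/
def L0pos (𝔓 : Set (Measure Ω)) : Set (Ω → ℝ) :=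
  {f | Measurable f ∧ QSLe 𝔓 (fun _ => 0) f}

/-- Representatives of elements of `L^∞_c`. -/
def Linf (𝔓 : Set (Measure Ω)) : Set (Ω → ℝ) :=
  {f | Measurable f ∧ ∃ m : ℝ, 0 < m ∧ QSLe 𝔓 (fun ω => |f ω|) (fun _ => m)}

/-- Representatives of elements of `L^∞_{c+}`. -/
def LinfPos (𝔓 : Set (Measure Ω)) : Set (Ω → ℝ) :=
  {f | f ∈ Linf 𝔓 ∧ QSLe 𝔓 (fun _ => 0) f}

/-- A set of functions representing a set of equivalence classes in `L⁰_c`: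
it consists of measurable functions and is saturated under `𝔓`-q.s. equality. -/
def IsL0Set (𝔓 : Set (Measure Ω)) (𝒞 : Set (Ω → ℝ)) : Prop :=
  𝒞 ⊆ L0 Ω ∧ ∀ f ∈ 𝒞, ∀ g : Ω → ℝ, Measurable g → QSEq 𝔓 f g → g ∈ 𝒞

/-- Function-level version of `j_Q⁻¹ (j_Q 𝒞)` (equivalently, of the subset `j_Q 𝒞` of `L⁰_Q`):
the `Q`-a.s. saturation of `𝒞`. -/
def jSat (Q : Measure Ω) (𝒞 : Set (Ω → ℝ)) : Set (Ω → ℝ) :=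
  {f | Measurable f ∧ ∃ g ∈ 𝒞, f =ᵐ[Q] g}

/-- `𝒬` is a reduction set for `𝒞`. -/
def IsReductionSet (𝔓 𝒬 : Set (Measure Ω)) (𝒞 : Set (Ω → ℝ)) : Prop :=
  𝒬.Nonempty ∧ 𝒬 ⊆ PC 𝔓 ∧ 𝒞 = ⋂ Q ∈ 𝒬, jSat Q 𝒞

/-- `𝒞` is `𝔓`-sensitive. -/
def Sensitive (𝔓 : Set (Measure Ω)) (𝒞 : Set (Ω → ℝ)) : Prop :=
  𝒞 = ⋂ Q ∈ PC 𝔓, jSat Q 𝒞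

/-- `𝒞` is `𝒬`-closed: closed under sequential convergence in `Q`-probability for all `Q ∈ 𝒬`
simultaneously. -/
def QClosedSet (𝒬 : Set (Measure Ω)) (𝒞 : Set (Ω → ℝ)) : Prop :=
  ∀ (X : ℕ → Ω → ℝ) (x : Ω → ℝ), (∀ n, X n ∈ 𝒞) → Measurable x →
    (∀ Q ∈ 𝒬, TendstoInMeasure Q X atTop x) → x ∈ 𝒞

/-- `𝒞` is locally `Q`-closed. -/
def LocallyQClosed (Q : Measure Ω) (𝒞 : Set (Ω → ℝ)) : Prop :=
  ∀ (X : ℕ → Ω → ℝ) (x : Ω → ℝ), (∀ n, X n ∈ 𝒞) → Measurable x →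
    TendstoInMeasure Q X atTop x → ∃ y ∈ 𝒞, x =ᵐ[Q] y

/-- `𝒞` is solid in `L⁰_c` (w.r.t. the quasi-sure order of `𝔓`). -/
def SolidL0 (𝔓 : Set (Measure Ω)) (𝒞 : Set (Ω → ℝ)) : Prop :=
  ∀ f ∈ 𝒞, ∀ g : Ω → ℝ, Measurable g →
    QSLe 𝔓 (fun ω => |g ω|) (fun ω => |f ω|) → g ∈ 𝒞

/-- `𝒞` is solid in `L⁰_{c+}`. -/
def SolidPos (𝔓 : Set (Measure Ω)) (𝒞 : Set (Ω → ℝ)) : Prop :=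
  𝒞 ⊆ L0pos 𝔓 ∧ ∀ f ∈ 𝒞, ∀ g ∈ L0pos 𝔓, QSLe 𝔓 g f → g ∈ 𝒞

/-- `𝒞` is solid (in either of the two senses). -/
def Solid (𝔓 : Set (Measure Ω)) (𝒞 : Set (Ω → ℝ)) : Prop :=
  SolidL0 𝔓 𝒞 ∨ SolidPos 𝔓 𝒞

/-- `f` is the infimum (greatest lower bound) of the family `Y` in the `𝔓`-q.s. order. -/
def IsQSInf (𝔓 : Set (Measure Ω)) {ι : Sort*} (Y : ι → Ω → ℝ) (f : Ω → ℝ) : Prop :=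
  (∀ a, QSLe 𝔓 f (Y a)) ∧
    ∀ g : Ω → ℝ, Measurable g → (∀ a, QSLe 𝔓 g (Y a)) → QSLe 𝔓 g f

/-- `f` is the supremum (least upper bound) of the family `Y` in the `𝔓`-q.s. order. -/
def IsQSSup (𝔓 : Set (Measure Ω)) {ι : Sort*} (Y : ι → Ω → ℝ) (f : Ω → ℝ) : Prop :=
  (∀ a, QSLe 𝔓 (Y a) f) ∧
    ∀ g : Ω → ℝ, Measurable g → (∀ a, QSLe 𝔓 (Y a) g) → QSLe 𝔓 f g

/-- Order convergence of a sequence in `L⁰_c`. -/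
def SeqOrderConv (𝔓 : Set (Measure Ω)) (X : ℕ → Ω → ℝ) (x : Ω → ℝ) : Prop :=
  ∃ Y : ℕ → Ω → ℝ, (∀ n, Measurable (Y n)) ∧
    (∀ m n : ℕ, m ≤ n → QSLe 𝔓 (Y n) (Y m)) ∧
    IsQSInf 𝔓 Y (fun _ => 0) ∧
    ∀ n, QSLe 𝔓 (fun ω => |X n ω - x ω|) (Y n)

/-- `𝒞` is sequentially order closed. -/
def SeqOrderClosed (𝔓 : Set (Measure Ω)) (𝒞 : Set (Ω → ℝ)) : Prop :=
  ∀ (X : ℕ → Ω → ℝ) (x : Ω → ℝ), (∀ n, X n ∈ 𝒞) → Measurable x →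
    SeqOrderConv 𝔓 X x → x ∈ 𝒞

/-- Order convergence of a net in `L⁰_c`. -/
def NetOrderConv (𝔓 : Set (Measure Ω)) {ι : Type*} [Preorder ι]
    (X : ι → Ω → ℝ) (x : Ω → ℝ) : Prop :=
  ∃ Y : ι → Ω → ℝ, (∀ a, Measurable (Y a)) ∧
    (∀ a b : ι, a ≤ b → QSLe 𝔓 (Y b) (Y a)) ∧
    IsQSInf 𝔓 Y (fun _ => 0) ∧
    ∀ a, QSLe 𝔓 (fun ω => |X a ω - x ω|) (Y a)

/-- `𝒞` is order closed (w.r.t. order convergence of nets). -/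
def OrderClosed (𝔓 : Set (Measure Ω)) (𝒞 : Set (Ω → ℝ)) : Prop :=
  ∀ (ι : Type*) [Preorder ι] [IsDirected ι (· ≤ ·)] [Nonempty ι],
    ∀ (X : ι → Ω → ℝ) (x : Ω → ℝ), (∀ a, X a ∈ 𝒞) → Measurable x →
      NetOrderConv 𝔓 X x → x ∈ 𝒞

/-- Order convergence of all (directed) nets is preserved under `j_Q`. -/
def NetOrderConvTransfer (𝔓 : Set (Measure Ω)) (Q : Measure Ω) : Prop :=
  ∀ (ι : Type*) [Preorder ι] [IsDirected ι (· ≤ ·)] [Nonempty ι],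
    ∀ (X : ι → Ω → ℝ) (x : Ω → ℝ), (∀ a, Measurable (X a)) → Measurable x →
      NetOrderConv 𝔓 X x → NetOrderConv {Q} X x

/-- A measure is supported (relative to the `𝔓`-polar sets). -/
def SupportedMeasure (𝔓 : Set (Measure Ω)) (μ : Measure Ω) : Prop :=
  ∃ S : Set Ω, MeasurableSet S ∧ μ Sᶜ = 0 ∧
    ∀ N : Set Ω, MeasurableSet N → μ (N ∩ S) = 0 → ∀ P ∈ 𝔓, P (N ∩ S) = 0

/-- The (possibly infinite) expectation `E_Q[f]` of a (q.s.) non-negative random variable. -/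
noncomputable def EExp (Q : Measure Ω) (f : Ω → ℝ) : ℝ≥0∞ :=
  ∫⁻ ω, ENNReal.ofReal (f ω) ∂Q

/-- The polar `𝒞°_𝒬` of `𝒞` consisting of pairs `(Q, Z)` with `Q ∈ 𝒬` and `Z` in the
set `Zs` of dual test functions (e.g. `L^∞_{c+}` or `L⁰_{c+}`). -/
def polarPairs (𝒬 : Set (Measure Ω)) (Zs 𝒞 : Set (Ω → ℝ)) :
    Set (Measure Ω × (Ω → ℝ)) :=
  {p | p.1 ∈ 𝒬 ∧ p.2 ∈ Zs ∧ ∀ f ∈ 𝒞, EExp p.1 (fun ω => p.2 ω * f ω) ≤ 1}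

/-- The bipolar `𝒞°°_𝒬` of `𝒞`. -/
def bipolarPairs (𝔓 𝒬 : Set (Measure Ω)) (Zs 𝒞 : Set (Ω → ℝ)) : Set (Ω → ℝ) :=
  {f | f ∈ L0pos 𝔓 ∧ ∀ p ∈ polarPairs 𝒬 Zs 𝒞, EExp p.1 (fun ω => p.2 ω * f ω) ≤ 1}

/-- The polar `𝒞^*_𝒬` with a uniform (supremum) constraint. -/
def starPolar (𝔓 𝒬 : Set (Measure Ω)) (𝒞 : Set (Ω → ℝ)) : Set (Ω → ℝ) :=
  {Z | Z ∈ LinfPos 𝔓 ∧ ∀ f ∈ 𝒞, (⨆ Q ∈ 𝒬, EExp Q fun ω => Z ω * f ω) ≤ 1}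

/-- The bipolar `𝒞^{**}_𝒬` with a uniform (supremum) constraint. -/
def starBipolar (𝔓 𝒬 : Set (Measure Ω)) (𝒞 : Set (Ω → ℝ)) : Set (Ω → ℝ) :=
  {f | f ∈ L0pos 𝔓 ∧ ∀ Z ∈ starPolar 𝔓 𝒬 𝒞, (⨆ Q ∈ 𝒬, EExp Q fun ω => Z ω * f ω) ≤ 1}

/-- `ca_c`: finite signed measures vanishing on all `𝔓`-polar sets. -/
def CAc (𝔓 : Set (Measure Ω)) : Set (SignedMeasure Ω) :=
  {ν | ∀ N : Set Ω, MeasurableSet N → (∀ P ∈ 𝔓, P N = 0) → ν.totalVariation N = 0}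

/-- A signed measure is supported if its total variation is. -/
def SupportedSigned (𝔓 : Set (Measure Ω)) (ν : SignedMeasure Ω) : Prop :=
  SupportedMeasure 𝔓 ν.totalVariation

/-- `sca_c`: supported signed measures in `ca_c`. -/
def SCAc (𝔓 : Set (Measure Ω)) : Set (SignedMeasure Ω) :=
  {ν | ν ∈ CAc 𝔓 ∧ SupportedSigned 𝔓 ν}

/-- A signed measure is non-negative. -/
def nonnegSM (ν : SignedMeasure Ω) : Prop := ∀ N : Set Ω, MeasurableSet N → 0 ≤ ν N

/-- The measure associated to a non-negative signed measure (its Jordan positive part). -/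
noncomputable def posMeas (ν : SignedMeasure Ω) : Measure Ω :=
  ν.toJordanDecomposition.posPart

/-- The pairing `∫ f dν` of a function with a signed measure. -/
noncomputable def pairSM (ν : SignedMeasure Ω) (f : Ω → ℝ) : ℝ :=
  ∫ ω, f ω ∂ν.toJordanDecomposition.posPart - ∫ ω, f ω ∂ν.toJordanDecomposition.negPart

/-- The total variation `|ν|` of a signed measure, as a signed measure. -/
noncomputable def tvSigned (ν : SignedMeasure Ω) : SignedMeasure Ω :=
  ν.toJordanDecomposition.posPart.toSignedMeasure +
    ν.toJordanDecomposition.negPart.toSignedMeasure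

/-- `𝔓` is of class (S). -/
def ClassS (𝔓 : Set (Measure Ω)) : Prop :=
  ∃ 𝒬 : Set (Measure Ω), 𝒬 ⊆ PC 𝔓 ∧ (∀ Q ∈ 𝒬, SupportedMeasure 𝔓 Q) ∧
    ∀ N : Set Ω, MeasurableSet N → ((∀ P ∈ 𝔓, P N = 0) ↔ ∀ Q ∈ 𝒬, Q N = 0)

/-- The polar `𝒞°_{ca}` of `𝒞 ⊂ L⁰_{c+}` inside `ca_{c+}` (non-negative members of `ca_c`). -/
def polarCA (𝔓 : Set (Measure Ω)) (𝒞 : Set (Ω → ℝ)) : Set (SignedMeasure Ω) :=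
  {ν | nonnegSM ν ∧ ν ∈ CAc 𝔓 ∧ ∀ f ∈ 𝒞, EExp (posMeas ν) f ≤ 1}

/-- The bipolar `𝒞°°_{ca}`. -/
def bipolarCA (𝔓 : Set (Measure Ω)) (𝒞 : Set (Ω → ℝ)) : Set (Ω → ℝ) :=
  {f | f ∈ L0pos 𝔓 ∧ ∀ ν ∈ polarCA 𝔓 𝒞, EExp (posMeas ν) f ≤ 1}

/-- The polar `𝒞°_{sca}` of `𝒞 ⊂ L⁰_{c+}` inside `sca_{c+}`. -/
def polarSCA (𝔓 : Set (Measure Ω)) (𝒞 : Set (Ω → ℝ)) : Set (SignedMeasure Ω) :=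
  {ν | nonnegSM ν ∧ ν ∈ SCAc 𝔓 ∧ ∀ f ∈ 𝒞, EExp (posMeas ν) f ≤ 1}

/-- The bipolar `𝒞°°_{sca}`. -/
def bipolarSCA (𝔓 : Set (Measure Ω)) (𝒞 : Set (Ω → ℝ)) : Set (Ω → ℝ) :=
  {f | f ∈ L0pos 𝔓 ∧ ∀ ν ∈ polarSCA 𝔓 𝒞, EExp (posMeas ν) f ≤ 1}

/-- The weak topology `σ(M, L^∞_c)` on a set `M` of signed measures. -/
noncomputable def sigmaTop (𝔓 : Set (Measure Ω)) (M : Set (SignedMeasure Ω)) :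
    TopologicalSpace M :=
  TopologicalSpace.induced
    (fun ν : M => fun X : Linf 𝔓 => pairSM ν.1 X.1) inferInstance

/-- The weak topology `σ(𝒳, 𝒴)` on `𝒳 ⊂ L⁰_c` induced by a set `𝒴` of signed measures. -/
noncomputable def sigmaTopDual (𝒳 : Set (Ω → ℝ)) (𝒴 : Set (SignedMeasure Ω)) :
    TopologicalSpace 𝒳 :=
  TopologicalSpace.induced
    (fun f : 𝒳 => fun ν : 𝒴 => pairSM ν.1 f.1) inferInstance

/-- `𝒞` is `𝒬`-stable: it contains every `𝒬`-aggregator of every `𝒬`-coherent family in `𝒞`. -/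
def QStable (𝒬 : Set (Measure Ω)) (𝒞 : Set (Ω → ℝ)) : Prop :=
  ∀ X : Measure Ω → Ω → ℝ, (∀ Q ∈ 𝒬, X Q ∈ 𝒞) →
    ∀ x : Ω → ℝ, Measurable x → (∀ Q ∈ 𝒬, X Q =ᵐ[Q] x) → x ∈ 𝒞

/-- Lifting bipolar representations. -/
theorem stmt3 {Ω : Type*} [MeasurableSpace Ω]
    (𝔓 : Set (Measure Ω)) (h𝔓ne : 𝔓.Nonempty)
    (h𝔓prob : ∀ P ∈ 𝔓, IsProbabilityMeasure P)
    (𝒳 : Set (Ω → ℝ)) (h𝒳L0 : IsL0Set 𝔓 𝒳) (h𝒳conv : Convex ℝ 𝒳)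
    (𝒞 : Set (Ω → ℝ)) (h𝒞ne : 𝒞.Nonempty) (h𝒞𝒳 : 𝒞 ⊆ 𝒳)
    (𝒬 : Set (Measure Ω)) (hred : IsReductionSet 𝔓 𝒬 𝒞)
    (𝒴 : Measure Ω → Set ((Ω → ℝ) → EReal))
    (h𝒴ne : ∀ Q ∈ 𝒬, (𝒴 Q).Nonempty)
    (h𝒴inv : ∀ Q ∈ 𝒬, ∀ l ∈ 𝒴 Q, ∀ f ∈ jSat Q 𝒳, ∀ g ∈ jSat Q 𝒳,
        f =ᵐ[Q] g → l f = l g)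
    (hbip : ∀ Q ∈ 𝒬,
        jSat Q 𝒞 = {f | f ∈ jSat Q 𝒳 ∧
          ∀ l ∈ 𝒴 Q, (∀ g ∈ jSat Q 𝒞, l g ≤ 1) → l f ≤ 1}) :
    𝒞 = {f | f ∈ 𝒳 ∧
      ∀ Q ∈ 𝒬, ∀ l ∈ 𝒴 Q, (∀ g ∈ jSat Q 𝒞, l g ≤ 1) → l f ≤ 1} := by
  ext f
  constructor
  · intro hf
    refine ⟨h𝒞𝒳 hf, fun Q hQ l hl hpol => ?_⟩
    exact hpol f ⟨h𝒳L0.1 (h𝒞𝒳 hf), f, hf, Filter.EventuallyEq.rfl⟩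
  · rintro ⟨hf𝒳, hpol⟩
    rw [hred.2.2]
    refine Set.mem_iInter₂.mpr fun Q hQ => ?_
    rw [hbip Q hQ]
    exact ⟨⟨h𝒳L0.1 hf𝒳, f, hf𝒳, Filter.EventuallyEq.rfl⟩, hpol Q hQ⟩
end Robust
end

section
/- Suppose 𝒞 ⊂ L⁰_c is 𝒫-sensitive with reduction set 𝒬 ⊂ 𝔓_c(Ω). If 𝒞 is locally Q-closed for every Q ∈ 𝒬, then 𝒞 is 𝒬-closed. If in addition 𝒞 is solid, then 𝒞 is locally Q-closed for every Q ∈ 𝒬 if and only if 𝒞 is 𝒬-closed. -/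
open MeasureTheory Filter Set
open scoped ENNReal

namespace Robust

variable {Ω : Type*} [MeasurableSpace Ω]

open scoped Topology

/-- A q.s. inequality between measurable functions transfers to any `Q` with `AC 𝔓 Q`. -/
private lemma qsLe_ae_of_AC {Ω : Type*} [MeasurableSpace Ω] {𝔓 : Set (Measure Ω)}
    {Q : Measure Ω} (hQ : AC 𝔓 Q) {f g : Ω → ℝ} (hf : Measurable f) (hg : Measurable g)
    (h : QSLe 𝔓 f g) : f ≤ᵐ[Q] g := by
  have hms : MeasurableSet {ω | ¬ f ω ≤ g ω} := (measurableSet_le hf hg).compl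
  exact (ae_iff).2 (hQ _ hms fun P hP => (ae_iff).1 (h P hP))

/-- If `𝒞` is solid and `𝒬`-closed, it is locally `Q`-closed for each `Q ∈ 𝒬`. -/
private lemma locally_of_qclosed {Ω : Type*} [MeasurableSpace Ω]
    (𝔓 : Set (Measure Ω)) (𝒞 : Set (Ω → ℝ)) (h𝒞 : IsL0Set 𝔓 𝒞)
    (𝒬 : Set (Measure Ω)) (h𝒬 : 𝒬 ⊆ PC 𝔓) (hsol : Solid 𝔓 𝒞)
    (hQc : QClosedSet 𝒬 𝒞) : ∀ Q ∈ 𝒬, LocallyQClosed Q 𝒞 := by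
  intro Q hQ X x hX hx hT
  obtain ⟨hQprob, hQac⟩ := h𝒬 hQ
  have hXm : ∀ n, Measurable (X n) := fun n => h𝒞.1 (hX n)
  obtain ⟨ns, -, hae⟩ := hT.exists_seq_tendsto_ae
  set Z : ℕ → Ω → ℝ := fun k => X (ns k) with hZ
  have hZm : ∀ k, Measurable (Z k) := fun k => hXm (ns k)
  -- the set on which all modifications take place
  rcases hsol with hsolid | hsolid
  · -- solid in L⁰
    set A : Set Ω := {ω | ∃ c, Tendsto (fun k => Z k ω) atTop (𝓝 c)} with hAdef
    have hA : MeasurableSet A := measurableSet_exists_tendsto hZm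
    set Y : ℕ → Ω → ℝ := fun k => A.indicator (Z k) with hY
    have hYm : ∀ k, Measurable (Y k) := fun k => (hZm k).indicator hA
    have hYC : ∀ k, Y k ∈ 𝒞 := by
      intro k
      refine hsolid (Z k) (hX (ns k)) (Y k) (hYm k) fun P hP => ae_of_all _ fun ω => ?_
      by_cases hω : ω ∈ A
      · simp [hY, Set.indicator_of_mem hω]
      · simp [hY, Set.indicator_of_notMem hω, abs_nonneg]
    set y : Ω → ℝ := fun ω => limUnder atTop (fun k => Y k ω) with hy
    have hYtend : ∀ ω, Tendsto (fun k => Y k ω) atTop (𝓝 (y ω)) := by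
      intro ω
      refine tendsto_nhds_limUnder ?_
      by_cases hω : ω ∈ A
      · obtain ⟨c, hc⟩ := id hω
        exact ⟨c, by simpa [hY, Set.indicator_of_mem hω] using hc⟩
      · exact ⟨0, by simp [hY, Set.indicator_of_notMem hω, tendsto_const_nhds]⟩
    have hym : Measurable y :=
      measurable_of_tendsto_metrizable hYm (tendsto_pi_nhds.2 hYtend)
    have hyC : y ∈ 𝒞 := by
      refine hQc Y y hYC hym fun Q' hQ' => ?_
      haveI : IsProbabilityMeasure Q' := (h𝒬 hQ').1
      exact tendstoInMeasure_of_tendsto_ae (fun k => (hYm k).aestronglyMeasurable)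
        (ae_of_all _ hYtend)
    refine ⟨y, hyC, ?_⟩
    filter_upwards [hae] with ω hω
    have hωA : ω ∈ A := ⟨x ω, hω⟩
    have h1 : Tendsto (fun k => Y k ω) atTop (𝓝 (x ω)) := by
      simpa [hY, Set.indicator_of_mem hωA] using hω
    exact tendsto_nhds_unique h1 (hYtend ω)
  · -- solid in L⁰₊
    have hZpos : ∀ k, QSLe 𝔓 (fun _ => 0) (Z k) := fun k => (hsolid.1 (hX (ns k))).2
    set A : Set Ω := {ω | ∀ k, 0 ≤ Z k ω} ∩
      {ω | ∃ c, Tendsto (fun k => Z k ω) atTop (𝓝 c)} with hAdef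
    have hA : MeasurableSet A := by
      have h1 : MeasurableSet {ω | ∀ k : ℕ, 0 ≤ Z k ω} := by
        rw [Set.setOf_forall]
        exact MeasurableSet.iInter fun k => measurableSet_le measurable_const (hZm k)
      exact h1.inter (measurableSet_exists_tendsto hZm)
    set Y : ℕ → Ω → ℝ := fun k => A.indicator (Z k) with hY
    have hYm : ∀ k, Measurable (Y k) := fun k => (hZm k).indicator hA
    have hYpos : ∀ k, Y k ∈ L0pos 𝔓 := by
      intro k
      refine ⟨hYm k, fun P hP => ae_of_all _ fun ω => ?_⟩
      by_cases hω : ω ∈ A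
      · simpa [hY, Set.indicator_of_mem hω] using hω.1 k
      · simp [hY, Set.indicator_of_notMem hω]
    have hYC : ∀ k, Y k ∈ 𝒞 := by
      intro k
      refine hsolid.2 (Z k) (hX (ns k)) (Y k) (hYpos k) fun P hP => ?_
      filter_upwards [hZpos k P hP] with ω hω
      by_cases hωA : ω ∈ A
      · simp [hY, Set.indicator_of_mem hωA]
      · simpa [hY, Set.indicator_of_notMem hωA] using hω
    set y : Ω → ℝ := fun ω => limUnder atTop (fun k => Y k ω) with hy
    have hYtend : ∀ ω, Tendsto (fun k => Y k ω) atTop (𝓝 (y ω)) := by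
      intro ω
      refine tendsto_nhds_limUnder ?_
      by_cases hω : ω ∈ A
      · obtain ⟨c, hc⟩ := hω.2
        exact ⟨c, by simpa [hY, Set.indicator_of_mem hω] using hc⟩
      · exact ⟨0, by simp [hY, Set.indicator_of_notMem hω, tendsto_const_nhds]⟩
    have hym : Measurable y :=
      measurable_of_tendsto_metrizable hYm (tendsto_pi_nhds.2 hYtend)
    have hyC : y ∈ 𝒞 := by
      refine hQc Y y hYC hym fun Q' hQ' => ?_
      haveI : IsProbabilityMeasure Q' := (h𝒬 hQ').1
      exact tendstoInMeasure_of_tendsto_ae (fun k => (hYm k).aestronglyMeasurable)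
        (ae_of_all _ hYtend)
    refine ⟨y, hyC, ?_⟩
    have hposQ : ∀ᵐ ω ∂Q, ∀ k, 0 ≤ Z k ω := by
      rw [ae_all_iff]
      exact fun k => qsLe_ae_of_AC hQac measurable_const (hZm k) (hZpos k)
    filter_upwards [hae, hposQ] with ω hω hωpos
    have hωA : ω ∈ A := ⟨hωpos, ⟨x ω, hω⟩⟩
    have h1 : Tendsto (fun k => Y k ω) atTop (𝓝 (x ω)) := by
      simpa [hY, Set.indicator_of_mem hωA] using hω
    exact tendsto_nhds_unique h1 (hYtend ω)

/-- Local `Q`-closedness for all `Q ∈ 𝒬` versus `𝒬`-closedness. -/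
theorem stmt5 {Ω : Type*} [MeasurableSpace Ω]
    (𝔓 : Set (Measure Ω)) (h𝔓ne : 𝔓.Nonempty)
    (h𝔓prob : ∀ P ∈ 𝔓, IsProbabilityMeasure P)
    (𝒞 : Set (Ω → ℝ)) (h𝒞 : IsL0Set 𝔓 𝒞)
    (𝒬 : Set (Measure Ω)) (hred : IsReductionSet 𝔓 𝒬 𝒞) :
    ((∀ Q ∈ 𝒬, LocallyQClosed Q 𝒞) → QClosedSet 𝒬 𝒞) ∧
    (Solid 𝔓 𝒞 → ((∀ Q ∈ 𝒬, LocallyQClosed Q 𝒞) ↔ QClosedSet 𝒬 𝒞)) := by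
  have part1 : (∀ Q ∈ 𝒬, LocallyQClosed Q 𝒞) → QClosedSet 𝒬 𝒞 := by
    intro hloc X x hX hx hconv
    have hmem : x ∈ ⋂ Q ∈ 𝒬, jSat Q 𝒞 := by
      refine Set.mem_iInter₂.2 fun Q hQ => ?_
      obtain ⟨y, hyC, hxy⟩ := hloc Q hQ X x hX hx (hconv Q hQ)
      exact ⟨hx, y, hyC, hxy⟩
    rw [hred.2.2]
    exact hmem
  refine ⟨part1, fun hsol => ⟨part1, fun hQc => ?_⟩⟩
  exact locally_of_qclosed 𝔓 𝒞 h𝒞 𝒬 hred.2.1 hsol hQc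
end Robust
end

section
/- Suppose 𝒞 ⊂ L⁰_c is non-empty, solid, and sequentially order closed, and let Q ∈ 𝔓_c(Ω). Then j_Q(𝒞) is order closed with respect to the Q-a.s. order in L⁰_Q. -/
open MeasureTheory Filter Set
open scoped ENNReal

namespace Robust

variable {Ω : Type*} [MeasurableSpace Ω]

open scoped Topology

private lemma clamp_abs_aux (c β : ℝ) (hβ : 0 ≤ β) :
    |max (-β) (min c β) - c| ≤ max (|c| - β) 0 := by
  rcases le_total c (-β) with h1 | h1
  · rw [min_eq_left (h1.trans (neg_le_self hβ)), max_eq_left h1,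
      abs_of_nonneg (by linarith), abs_of_nonpos (by linarith : c ≤ 0)]
    exact le_max_of_le_left (by linarith)
  · rcases le_total c β with h2 | h2
    · rw [min_eq_left h2, max_eq_right h1]
      simp
    · rw [min_eq_right h2, max_eq_right (by linarith), abs_of_nonpos (by linarith),
        abs_of_nonneg (by linarith : 0 ≤ c)]
      exact le_max_of_le_left (by linarith)

private lemma exists_Y_aux (h : Ω → ℝ) (hh : Measurable h) (b : ℕ → Ω → ℝ)
    (hb : ∀ n, Measurable (b n)) (hb0 : ∀ n ω, 0 ≤ b n ω)
    (hcv : ∀ ω, h ω ≤ 0 ∨ Tendsto (fun n => b n ω) atTop (𝓝 (h ω))) :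
    ∃ Y : ℕ → Ω → ℝ, (∀ n, Measurable (Y n)) ∧
      (∀ m n, m ≤ n → ∀ ω, Y n ω ≤ Y m ω) ∧
      (∀ n ω, 0 ≤ Y n ω) ∧
      (∀ ω, Tendsto (fun n => Y n ω) atTop (𝓝 0)) ∧
      (∀ n ω, max (h ω - b n ω) 0 ≤ Y n ω) := by
  set I : ℕ → Ω → ℝ := fun n ω => (⨅ k, ENNReal.ofReal (b (n + k) ω)).toReal with hI
  have hIne : ∀ n ω, (⨅ k, ENNReal.ofReal (b (n + k) ω)) ≠ ∞ := fun n ω =>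
    ne_top_of_le_ne_top ENNReal.ofReal_ne_top (iInf_le _ 0)
  have hImeas : ∀ n, Measurable (I n) := fun n =>
    (Measurable.iInf fun k => ENNReal.measurable_ofReal.comp (hb (n + k))).ennreal_toReal
  have hInn : ∀ n ω, 0 ≤ I n ω := fun n ω => ENNReal.toReal_nonneg
  have hIle : ∀ n k ω, I n ω ≤ b (n + k) ω := by
    intro n k ω
    have := ENNReal.toReal_mono ENNReal.ofReal_ne_top
      (iInf_le (fun k => ENNReal.ofReal (b (n + k) ω)) k)
    rwa [ENNReal.toReal_ofReal (hb0 _ _)] at this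
  have hle_I : ∀ n ω (c : ℝ), (∀ k, c ≤ b (n + k) ω) → c ≤ I n ω := by
    intro n ω c hc
    rcases le_or_gt c 0 with h0 | h0
    · exact h0.trans (hInn n ω)
    · have h1 : ENNReal.ofReal c ≤ ⨅ k, ENNReal.ofReal (b (n + k) ω) :=
        le_iInf fun k => ENNReal.ofReal_le_ofReal (hc k)
      have := ENNReal.toReal_mono (hIne n ω) h1
      rwa [ENNReal.toReal_ofReal h0.le] at this
  have hImono : ∀ m n, m ≤ n → ∀ ω, I m ω ≤ I n ω := by
    intro m n hmn ω
    refine ENNReal.toReal_mono (hIne n ω) (le_iInf fun k => ?_)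
    have hk : m + (n - m + k) = n + k := by omega
    exact iInf_le_of_le (n - m + k) (by rw [hk])
  refine ⟨fun n ω => max (h ω - I n ω) 0, fun n => ((hh.sub (hImeas n)).max measurable_const),
    fun m n hmn ω => max_le_max (by have := hImono m n hmn ω; linarith) le_rfl,
    fun n ω => le_max_right _ _, ?_,
    fun n ω => max_le_max (by have := hIle n 0 ω; simp at this; linarith) le_rfl⟩
  intro ω
  rcases hcv ω with h0 | htd
  · have : ∀ n, max (h ω - I n ω) 0 = 0 := fun n =>
      max_eq_right (by have := hInn n ω; linarith)
    simp only [this]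
    exact tendsto_const_nhds
  · rw [Metric.tendsto_atTop]
    intro ε hε
    obtain ⟨N, hN⟩ := (Metric.tendsto_atTop.1 htd) (ε / 2) (by linarith)
    refine ⟨N, fun n hn => ?_⟩
    have hlow : h ω - ε / 2 ≤ I n ω := by
      refine hle_I n ω _ fun k => ?_
      have := hN (n + k) (le_trans hn (Nat.le_add_right _ _))
      rw [Real.dist_eq, abs_lt] at this
      linarith [this.1]
    have : max (h ω - I n ω) 0 ≤ ε / 2 := max_le (by linarith) (by linarith)
    rw [Real.dist_eq, sub_zero, abs_of_nonneg (le_max_right _ _)]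
    linarith

private lemma partB_aux (𝔓 : Set (Measure Ω)) (𝒞 : Set (Ω → ℝ)) (h𝒞L0 : IsL0Set 𝔓 𝒞)
    (hsolid : Solid 𝔓 𝒞) (hclosed : SeqOrderClosed 𝔓 𝒞)
    (Q : Measure Ω) (hQ : Q ∈ PC 𝔓)
    (g : ℕ → Ω → ℝ) (hg : ∀ n, g n ∈ 𝒞) (x : Ω → ℝ)
    (hconv : ∀ᵐ ω ∂Q, Tendsto (fun n => g n ω) atTop (𝓝 (x ω))) :
    ∃ f ∈ 𝒞, x =ᵐ[Q] f := by
  classical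
  have hmg : ∀ n, Measurable (g n) := fun n => h𝒞L0.1 (hg n)
  -- the limit function
  set glim : Ω → ℝ := fun ω =>
    if hω : ∃ c, Tendsto (fun n => g n ω) atTop (𝓝 c) then hω.choose else 0 with hglim
  have hA : MeasurableSet {ω | ∃ c, Tendsto (fun n => g n ω) atTop (𝓝 c)} :=
    measurableSet_exists_tendsto hmg
  have hlim_on : ∀ ω, (∃ c, Tendsto (fun n => g n ω) atTop (𝓝 c)) →
      Tendsto (fun n => g n ω) atTop (𝓝 (glim ω)) := by
    intro ω hω
    rw [hglim]
    simp only [dif_pos hω]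
    exact hω.choose_spec
  have hglim0 : ∀ ω, ¬(∃ c, Tendsto (fun n => g n ω) atTop (𝓝 c)) → glim ω = 0 := by
    intro ω hω
    rw [hglim]
    simp only [dif_neg hω]
  have hkey : ∀ ω, Tendsto
      (fun n => ({ω | ∃ c, Tendsto (fun n => g n ω) atTop (𝓝 c)}.indicator (g n)) ω)
      atTop (𝓝 (glim ω)) := by
    intro ω
    by_cases hω : ∃ c, Tendsto (fun n => g n ω) atTop (𝓝 c)
    · have hmem : ω ∈ {ω | ∃ c, Tendsto (fun n => g n ω) atTop (𝓝 c)} := hω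
      have : ∀ n, ({ω | ∃ c, Tendsto (fun n => g n ω) atTop (𝓝 c)}.indicator (g n)) ω = g n ω :=
        fun n => Set.indicator_of_mem hmem (g n)
      simp only [this]
      exact hlim_on ω hω
    · have hmem : ω ∉ {ω | ∃ c, Tendsto (fun n => g n ω) atTop (𝓝 c)} := hω
      have : ∀ n, ({ω | ∃ c, Tendsto (fun n => g n ω) atTop (𝓝 c)}.indicator (g n)) ω = 0 :=
        fun n => Set.indicator_of_notMem hmem (g n)
      simp only [this, hglim0 ω hω]
      exact tendsto_const_nhds
  have hmglim : Measurable glim :=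
    measurable_of_tendsto_metrizable (fun n => (hmg n).indicator hA) (tendsto_pi_nhds.2 hkey)
  have hxg : x =ᵐ[Q] glim := by
    filter_upwards [hconv] with ω hω
    have hω' : ∃ c, Tendsto (fun n => g n ω) atTop (𝓝 c) := ⟨x ω, hω⟩
    exact tendsto_nhds_unique hω (hlim_on ω hω')
  rcases hsolid with hs | ⟨hsub, hs⟩
  · -- SolidL0 case
    have hcv : ∀ ω, (fun ω => |glim ω|) ω ≤ 0 ∨
        Tendsto (fun n => |g n ω|) atTop (𝓝 (|glim ω|)) := by
      intro ω
      by_cases hω : ∃ c, Tendsto (fun n => g n ω) atTop (𝓝 c)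
      · exact Or.inr ((hlim_on ω hω).abs)
      · exact Or.inl (by simp only [hglim0 ω hω]; simp)
    obtain ⟨Y, hYm, hYdec, hYnn, hYtd, hYdom⟩ :=
      exists_Y_aux (fun ω => |glim ω|) hmglim.abs (fun n ω => |g n ω|)
        (fun n => (hmg n).abs) (fun n ω => abs_nonneg _) hcv
    set G : ℕ → Ω → ℝ := fun n ω => max (-(|g n ω|)) (min (glim ω) (|g n ω|)) with hG
    have hmG : ∀ n, Measurable (G n) := fun n =>
      ((hmg n).abs.neg).max (hmglim.min (hmg n).abs)
    have hGmem : ∀ n, G n ∈ 𝒞 := by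
      intro n
      refine hs (g n) (hg n) (G n) (hmG n) fun P _ => Eventually.of_forall fun ω => ?_
      exact abs_le.2 ⟨le_max_left _ _,
        max_le (neg_le_self (abs_nonneg _)) (min_le_right _ _)⟩
    have hGC : glim ∈ 𝒞 := by
      refine hclosed G glim hGmem hmglim ⟨Y, hYm, fun m n hmn P _ =>
        Eventually.of_forall (hYdec m n hmn),
        ⟨fun n P _ => Eventually.of_forall (hYnn n), ?_⟩,
        fun n P _ => Eventually.of_forall fun ω => ?_⟩
      · intro w hw hwle P hP
        have h1 : ∀ᵐ ω ∂P, ∀ n, w ω ≤ Y n ω := ae_all_iff.2 fun n => hwle n P hP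
        filter_upwards [h1] with ω hω
        exact ge_of_tendsto (hYtd ω) (Eventually.of_forall hω)
      · exact le_trans (clamp_abs_aux (glim ω) (|g n ω|) (abs_nonneg _)) (hYdom n ω)
    exact ⟨glim, hGC, hxg⟩
  · -- SolidPos case
    have hcv : ∀ ω, (fun ω => max (glim ω) 0) ω ≤ 0 ∨
        Tendsto (fun n => max (g n ω) 0) atTop (𝓝 (max (glim ω) 0)) := by
      intro ω
      by_cases hω : ∃ c, Tendsto (fun n => g n ω) atTop (𝓝 c)
      · exact Or.inr ((hlim_on ω hω).max tendsto_const_nhds)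
      · exact Or.inl (by simp only [hglim0 ω hω]; simp)
    obtain ⟨Y, hYm, hYdec, hYnn, hYtd, hYdom⟩ :=
      exists_Y_aux (fun ω => max (glim ω) 0) (hmglim.max measurable_const)
        (fun n ω => max (g n ω) 0) (fun n => (hmg n).max measurable_const)
        (fun n ω => le_max_right _ _) hcv
    set G : ℕ → Ω → ℝ := fun n ω => min (max (glim ω) 0) (max (g n ω) 0) with hG
    have hmG : ∀ n, Measurable (G n) := fun n =>
      (hmglim.max measurable_const).min ((hmg n).max measurable_const)
    have hGmem : ∀ n, G n ∈ 𝒞 := by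
      intro n
      refine hs (g n) (hg n) (G n)
        ⟨hmG n, fun P _ => Eventually.of_forall fun ω =>
          le_min (le_max_right _ _) (le_max_right _ _)⟩ fun P hP => ?_
      filter_upwards [(hsub (hg n)).2 P hP] with ω hω
      calc G n ω ≤ max (g n ω) 0 := min_le_right _ _
      _ = g n ω := max_eq_left hω
    have hGC : (fun ω => max (glim ω) 0) ∈ 𝒞 := by
      refine hclosed G _ hGmem (hmglim.max measurable_const) ⟨Y, hYm, fun m n hmn P _ =>
        Eventually.of_forall (hYdec m n hmn),
        ⟨fun n P _ => Eventually.of_forall (hYnn n), ?_⟩,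
        fun n P _ => Eventually.of_forall fun ω => ?_⟩
      · intro w hw hwle P hP
        have h1 : ∀ᵐ ω ∂P, ∀ n, w ω ≤ Y n ω := ae_all_iff.2 fun n => hwle n P hP
        filter_upwards [h1] with ω hω
        exact ge_of_tendsto (hYtd ω) (Eventually.of_forall hω)
      · refine le_trans ?_ (hYdom n ω)
        rcases le_total (max (glim ω) 0) (max (g n ω) 0) with h1 | h1
        · rw [hG]
          simp only [min_eq_left h1, sub_self, abs_zero]
          exact le_max_right _ _
        · rw [hG]
          simp only [min_eq_right h1]
          rw [abs_of_nonpos (by linarith)]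
          exact le_max_of_le_left (by linarith)
    have hxnn : ∀ᵐ ω ∂Q, 0 ≤ x ω := by
      have hnn : ∀ n, ∀ᵐ ω ∂Q, 0 ≤ g n ω := by
        intro n
        have hNm : MeasurableSet {ω | ¬ (0:ℝ) ≤ g n ω} := by
          have : {ω | ¬ (0:ℝ) ≤ g n ω} = {ω | g n ω < 0} := by
            ext ω; simp [not_le]
          rw [this]
          exact measurableSet_lt (hmg n) measurable_const
        have hQN : Q {ω | ¬ (0:ℝ) ≤ g n ω} = 0 := by
          refine hQ.2 _ hNm fun P hP => ?_
          exact ae_iff.1 ((hsub (hg n)).2 P hP)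
        exact ae_iff.2 hQN
      filter_upwards [hconv, ae_all_iff.2 hnn] with ω hω hω'
      exact ge_of_tendsto hω (Eventually.of_forall hω')
    refine ⟨fun ω => max (glim ω) 0, hGC, ?_⟩
    filter_upwards [hxg, hxnn] with ω h1 h2
    rw [← h1, max_eq_left h2]

/-- If `𝒞` is solid and sequentially order closed, then `j_Q(𝒞)` is
order closed w.r.t. the `Q`-a.s. order in `L⁰_Q`. -/
theorem stmt7 {Ω : Type*} [MeasurableSpace Ω]
    (𝔓 : Set (Measure Ω)) (h𝔓ne : 𝔓.Nonempty)
    (h𝔓prob : ∀ P ∈ 𝔓, IsProbabilityMeasure P)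
    (𝒞 : Set (Ω → ℝ)) (h𝒞L0 : IsL0Set 𝔓 𝒞) (h𝒞ne : 𝒞.Nonempty)
    (hsolid : Solid 𝔓 𝒞) (hclosed : SeqOrderClosed 𝔓 𝒞)
    (Q : Measure Ω) (hQ : Q ∈ PC 𝔓) :
    OrderClosed {Q} (jSat Q 𝒞) := by
  intro ι _ _ _ X x hX hx hconv
  obtain ⟨Y, hmY, hYmono, hYinf, hYdom⟩ := hconv
  haveI : IsProbabilityMeasure Q := hQ.1
  have hQmem : Q ∈ ({Q} : Set (Measure Ω)) := rfl
  -- truncated versions of Y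
  set V : ι → Ω → ℝ := fun a ω => max 0 (min (Y a ω) 1) with hV
  have hmV : ∀ a, Measurable (V a) := fun a =>
    measurable_const.max ((hmY a).min measurable_const)
  have hV0 : ∀ a ω, 0 ≤ V a ω := fun a ω => le_max_left _ _
  have hV1 : ∀ a ω, V a ω ≤ 1 := fun a ω => max_le zero_le_one (min_le_right _ _)
  have hVmono : ∀ a b, a ≤ b → ∀ᵐ ω ∂Q, V b ω ≤ V a ω := by
    intro a b hab
    filter_upwards [hYmono a b hab Q hQmem] with ω hω
    exact max_le_max le_rfl (min_le_min hω le_rfl)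
  have hVint : ∀ a, Integrable (V a) Q := by
    intro a
    refine Integrable.mono' (integrable_const 1) (hmV a).aestronglyMeasurable
      (Eventually.of_forall fun ω => ?_)
    rw [Real.norm_eq_abs, abs_of_nonneg (hV0 a ω)]
    exact hV1 a ω
  set E : ι → ℝ := fun a => ∫ ω, V a ω ∂Q with hE
  have hE0 : ∀ a, 0 ≤ E a := fun a => integral_nonneg (hV0 a)
  have hEbdd : BddBelow (Set.range E) := ⟨0, fun r ⟨a, ha⟩ => ha ▸ hE0 a⟩
  set c : ℝ := ⨅ a, E a with hc
  have hcle : ∀ a, c ≤ E a := fun a => ciInf_le hEbdd a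
  have hEmono : ∀ a b, a ≤ b → E b ≤ E a := fun a b hab =>
    integral_mono_ae (hVint b) (hVint a) (hVmono a b hab)
  -- choose a monotone sequence nearly attaining the infimum
  have hbn : ∀ n : ℕ, ∃ a, E a < c + 1 / (n + 1) := by
    intro n
    refine exists_lt_of_ciInf_lt ?_
    have : (0:ℝ) < 1 / (n + 1) := by positivity
    linarith
  choose bb hbb using hbn
  obtain ⟨aa, h1, h2⟩ : ∃ a : ℕ → ι, (∀ n, bb n ≤ a n) ∧ (∀ n, a n ≤ a (n + 1)) := by
    refine ⟨fun n => Nat.rec (bb 0)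
      (fun n an => (directed_of (· ≤ ·) an (bb (n + 1))).choose) n, fun n => ?_, fun n => ?_⟩
    · cases n with
      | zero => exact le_rfl
      | succ n => exact (directed_of (· ≤ ·) _ (bb (n + 1))).choose_spec.2
    · exact (directed_of (· ≤ ·) _ (bb (n + 1))).choose_spec.1
  have hamono : Monotone aa := monotone_nat_of_le_succ h2
  have hEa : ∀ n, E (aa n) < c + 1 / (n + 1) := fun n =>
    lt_of_le_of_lt (hEmono (bb n) (aa n) (h1 n)) (hbb n)
  -- the candidate infimum function
  set hfun : Ω → ℝ := fun ω => (⨅ n, ENNReal.ofReal (V (aa n) ω)).toReal with hhfun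
  have hIne : ∀ ω, (⨅ n, ENNReal.ofReal (V (aa n) ω)) ≠ ∞ := fun ω =>
    ne_top_of_le_ne_top ENNReal.ofReal_ne_top (iInf_le _ 0)
  have hmhfun : Measurable hfun :=
    (Measurable.iInf fun n => ENNReal.measurable_ofReal.comp (hmV (aa n))).ennreal_toReal
  have hfun0 : ∀ ω, 0 ≤ hfun ω := fun ω => ENNReal.toReal_nonneg
  have hfunle : ∀ n ω, hfun ω ≤ V (aa n) ω := by
    intro n ω
    have := ENNReal.toReal_mono ENNReal.ofReal_ne_top
      (iInf_le (fun n => ENNReal.ofReal (V (aa n) ω)) n)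
    rwa [ENNReal.toReal_ofReal (hV0 _ _)] at this
  have hfunint : Integrable hfun Q := by
    refine Integrable.mono' (integrable_const 1) hmhfun.aestronglyMeasurable
      (Eventually.of_forall fun ω => ?_)
    rw [Real.norm_eq_abs, abs_of_nonneg (hfun0 ω)]
    exact (hfunle 0 ω).trans (hV1 _ _)
  -- hfun is a lower bound for all Y a, hence ≤ 0 a.e., hence = 0 a.e.
  have hlow : ∀ a, hfun ≤ᵐ[Q] Y a := by
    intro a
    set F : Ω → ℝ := fun ω => max (hfun ω - V a ω) 0 with hF
    have hmF : Measurable F := (hmhfun.sub (hmV a)).max measurable_const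
    have hFint : Integrable F Q := by
      refine Integrable.mono' (integrable_const 1) hmF.aestronglyMeasurable
        (Eventually.of_forall fun ω => ?_)
      rw [Real.norm_eq_abs, abs_of_nonneg (le_max_right _ _)]
      refine max_le ?_ zero_le_one
      have := hV0 a ω
      have := (hfunle 0 ω).trans (hV1 _ _)
      linarith
    have hFn : ∀ n : ℕ, ∫ ω, F ω ∂Q ≤ 1 / (n + 1) := by
      intro n
      obtain ⟨b', hb1, hb2⟩ := directed_of (· ≤ ·) a (aa n)
      have hab : ∀ᵐ ω ∂Q, F ω ≤ V (aa n) ω - V b' ω := by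
        filter_upwards [hVmono a b' hb1, hVmono (aa n) b' hb2] with ω hω1 hω2
        have h3 := hfunle n ω
        exact max_le (by linarith) (by linarith)
      have h4 : c ≤ E b' := hcle b'
      have h5 := hEa n
      calc ∫ ω, F ω ∂Q ≤ ∫ ω, (V (aa n) ω - V b' ω) ∂Q :=
            integral_mono_ae hFint ((hVint (aa n)).sub (hVint b')) hab
      _ = E (aa n) - E b' := integral_sub (hVint (aa n)) (hVint b')
      _ ≤ 1 / (n + 1) := by linarith
    have hFle0 : ∫ ω, F ω ∂Q ≤ 0 :=
      ge_of_tendsto' tendsto_one_div_add_atTop_nhds_zero_nat hFn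
    have hF0 : ∫ ω, F ω ∂Q = 0 := le_antisymm hFle0 (integral_nonneg fun ω => le_max_right _ _)
    have hFae : F =ᵐ[Q] 0 :=
      (integral_eq_zero_iff_of_nonneg (fun ω => le_max_right _ _) hFint).1 hF0
    filter_upwards [hFae, hYinf.1 a Q hQmem] with ω hω hω2
    have hle : hfun ω - V a ω ≤ 0 := by
      by_contra hcon
      push_neg at hcon
      rw [Pi.zero_apply] at hω
      have : F ω = hfun ω - V a ω := max_eq_left hcon.le
      rw [hω] at this
      linarith
    have hVY : V a ω ≤ Y a ω := by
      have h0 : (0:ℝ) ≤ Y a ω := hω2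
      exact max_le h0 (min_le_left _ _)
    linarith
  have hfun_zero : ∀ᵐ ω ∂Q, hfun ω = 0 := by
    have := hYinf.2 hfun hmhfun (fun a P hP => by
      rw [Set.mem_singleton_iff] at hP
      subst hP
      exact hlow a) Q hQmem
    filter_upwards [this] with ω hω
    exact le_antisymm hω (hfun0 ω)
  -- along aa, V tends to 0 a.e., hence Y tends to 0 a.e., hence X tends to x a.e.
  have hVdec : ∀ᵐ ω ∂Q, ∀ n, V (aa (n + 1)) ω ≤ V (aa n) ω :=
    ae_all_iff.2 fun n => hVmono (aa n) (aa (n + 1)) (h2 n)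
  have hYnn : ∀ᵐ ω ∂Q, ∀ n, 0 ≤ Y (aa n) ω :=
    ae_all_iff.2 fun n => hYinf.1 (aa n) Q hQmem
  have hXdom : ∀ᵐ ω ∂Q, ∀ n, |X (aa n) ω - x ω| ≤ Y (aa n) ω :=
    ae_all_iff.2 fun n => hYdom (aa n) Q hQmem
  have hXtd : ∀ᵐ ω ∂Q, Tendsto (fun n => X (aa n) ω) atTop (𝓝 (x ω)) := by
    filter_upwards [hfun_zero, hVdec, hYnn, hXdom] with ω h0 hdec hnn hdom
    have hanti : Antitone fun n => V (aa n) ω := antitone_nat_of_succ_le hdec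
    -- the ENNReal infimum is 0
    have hinf0 : (⨅ n, ENNReal.ofReal (V (aa n) ω)) = 0 := by
      have := ENNReal.toReal_eq_zero_iff _ |>.1 h0
      rcases this with h | h
      · exact h
      · exact absurd h (hIne ω)
    have hsmall : ∀ ε : ℝ, 0 < ε → ∃ n, V (aa n) ω < ε := by
      intro ε hε
      by_contra hcon
      push_neg at hcon
      have : ENNReal.ofReal ε ≤ ⨅ n, ENNReal.ofReal (V (aa n) ω) :=
        le_iInf fun n => ENNReal.ofReal_le_ofReal (hcon n)
      rw [hinf0, le_zero_iff, ENNReal.ofReal_eq_zero] at this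
      linarith
    have hYtd : Tendsto (fun n => Y (aa n) ω) atTop (𝓝 0) := by
      rw [Metric.tendsto_atTop]
      intro ε hε
      obtain ⟨n0, hn0⟩ := hsmall (min ε 1) (lt_min hε zero_lt_one)
      refine ⟨n0, fun n hn => ?_⟩
      have hVn : V (aa n) ω < min ε 1 := lt_of_le_of_lt (hanti hn) hn0
      have hYle1 : Y (aa n) ω ≤ 1 := by
        by_contra hcon
        push_neg at hcon
        have : V (aa n) ω = 1 := by
          rw [hV]
          simp only [min_eq_right hcon.le, max_eq_right zero_le_one]
        rw [this] at hVn
        have := min_le_right ε (1:ℝ)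
        linarith
      have hVY : V (aa n) ω = Y (aa n) ω := by
        rw [hV]
        simp only [min_eq_left hYle1, max_eq_right (hnn n)]
      rw [Real.dist_eq, sub_zero, abs_of_nonneg (hnn n), ← hVY]
      exact lt_of_lt_of_le hVn (min_le_left _ _)
    rw [tendsto_iff_dist_tendsto_zero]
    refine squeeze_zero (fun n => dist_nonneg) (fun n => ?_) hYtd
    rw [Real.dist_eq]
    exact hdom n
  -- extract 𝒞-representatives and apply the sequential result
  have hXg : ∀ n : ℕ, ∃ gg, gg ∈ 𝒞 ∧ X (aa n) =ᵐ[Q] gg := fun n => (hX (aa n)).2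
  choose gg hggmem hggeq using hXg
  have hgconv : ∀ᵐ ω ∂Q, Tendsto (fun n => gg n ω) atTop (𝓝 (x ω)) := by
    filter_upwards [hXtd, ae_all_iff.2 hggeq] with ω hω hωeq
    exact hω.congr fun n => hωeq n
  obtain ⟨f, hf, hxf⟩ := partB_aux 𝔓 𝒞 h𝒞L0 hsolid hclosed Q hQ gg hggmem x hgconv
  exact ⟨hx, f, hf, hxf⟩

end Robust
end

section
/- Suppose 𝒞 ⊂ L⁰_c is solid and 𝒫-sensitive with reduction set 𝒬 ⊂ 𝔓_c(Ω). Then the following are equivalent: (1) 𝒞 is sequentially order closed; (2) 𝒞 is 𝒬-closed; (3) 𝒞 is locally Q-closed for each Q ∈ 𝒬; (4) j_Q(𝒞) is Q-closed in L⁰_Q for each Q ∈ 𝒬; (5) j_Q(𝒞) is order closed with respect to the Q-a.s. order on L⁰_Q for each Q ∈ 𝒬; (6) j_Q(𝒞) is sequentially order closed with respect to the Q-a.s. order on L⁰_Q for each Q ∈ 𝒬. -/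
open MeasureTheory Filter Set
open scoped ENNReal

namespace Robust

variable {Ω : Type*} [MeasurableSpace Ω]

/-! ### Auxiliary lemmas -/

section Aux

variable {𝔓 : Set (Measure Ω)} {Q : Measure Ω}

lemma qsLe_singleton {f g : Ω → ℝ} : QSLe {Q} f g ↔ f ≤ᵐ[Q] g := by
  simp [QSLe]

lemma qsLe_of_forall {f g : Ω → ℝ} (h : ∀ ω, f ω ≤ g ω) :
    QSLe 𝔓 f g := fun _ _ => Filter.Eventually.of_forall h

lemma qsLe_ae (hQ : Q ∈ PC 𝔓) {f g : Ω → ℝ}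
    (hf : Measurable f) (hg : Measurable g) (h : QSLe 𝔓 f g) :
    f ≤ᵐ[Q] g := by
  have hN : MeasurableSet {ω | g ω < f ω} := measurableSet_lt hg hf
  have h0 : ∀ P ∈ 𝔓, P {ω | g ω < f ω} = 0 := by
    intro P hP
    have := h P hP
    rw [EventuallyLE, ae_iff] at this
    simpa only [not_le] using this
  have := hQ.2 _ hN h0
  rw [EventuallyLE, ae_iff]
  simpa only [not_le] using this

/-- The auxiliary measurable infimum `H` of a sequence `Y`, with its key properties. -/
lemma exists_H {Y : ℕ → Ω → ℝ}
    (hYm : ∀ n, Measurable (Y n)) (hpos : ∀ n, QSLe 𝔓 (fun _ => 0) (Y n)) :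
    ∃ H : Ω → ℝ, Measurable H ∧ (∀ ω, 0 ≤ H ω) ∧ (∀ n, QSLe 𝔓 H (Y n)) ∧
      (∀ ω, (∀ n, 0 ≤ Y n ω) → (Antitone fun n => Y n ω) → H ω ≤ 0 →
        Tendsto (fun n => Y n ω) atTop (nhds 0)) ∧
      (∀ Q : Measure Ω, ∀ g : Ω → ℝ, (∀ n, g ≤ᵐ[Q] Y n) → H ≤ᵐ[Q] 0 → g ≤ᵐ[Q] 0) := by
  classical
  set h0 : Ω → ℝ≥0∞ := fun ω => ⨅ n, ENNReal.ofReal (Y n ω) with hh0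
  have h0m : Measurable h0 := Measurable.iInf fun n => (hYm n).ennreal_ofReal
  have h0fin : ∀ ω, h0 ω ≠ ∞ := fun ω =>
    ne_top_of_le_ne_top ENNReal.ofReal_ne_top (iInf_le _ 0)
  refine ⟨fun ω => (h0 ω).toReal, h0m.ennreal_toReal, fun ω => ENNReal.toReal_nonneg, ?_, ?_, ?_⟩
  · intro n P hP
    filter_upwards [hpos n P hP] with ω hω
    calc (h0 ω).toReal ≤ (ENNReal.ofReal (Y n ω)).toReal :=
          ENNReal.toReal_mono ENNReal.ofReal_ne_top (iInf_le _ n)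
      _ = Y n ω := ENNReal.toReal_ofReal hω
  · intro ω hpos' hanti hH
    have h00 : h0 ω = 0 := by
      have : (h0 ω).toReal = 0 := le_antisymm hH ENNReal.toReal_nonneg
      exact (ENNReal.toReal_eq_zero_iff _).mp this |>.resolve_right (h0fin ω)
    have hanti' : Antitone fun n => ENNReal.ofReal (Y n ω) :=
      fun m n hmn => ENNReal.ofReal_le_ofReal (hanti hmn)
    have ht : Tendsto (fun n => ENNReal.ofReal (Y n ω)) atTop (nhds 0) := by
      have := tendsto_atTop_iInf hanti'
      have he : (⨅ i, ENNReal.ofReal (Y i ω)) = 0 := h00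
      rwa [he] at this
    have := (ENNReal.tendsto_toReal ENNReal.zero_ne_top).comp ht
    simp only [Function.comp_def] at this
    rw [ENNReal.toReal_zero] at this
    refine this.congr fun n => ENNReal.toReal_ofReal (hpos' n)
  · intro Q g hg hH
    have hg' : ∀ᵐ ω ∂Q, ∀ n, g ω ≤ Y n ω := ae_all_iff.mpr hg
    filter_upwards [hg', hH] with ω hω hHω
    by_contra hcon
    push_neg at hcon
    have h1 : ENNReal.ofReal (g ω) ≤ h0 ω :=
      le_iInf fun n => ENNReal.ofReal_le_ofReal (hω n)
    have h2 : g ω ≤ (h0 ω).toReal := by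
      calc g ω = (ENNReal.ofReal (g ω)).toReal := (ENNReal.toReal_ofReal hcon.le).symm
        _ ≤ (h0 ω).toReal := ENNReal.toReal_mono (h0fin ω) h1
    exact absurd (h2.trans hHω) (not_le.mpr hcon)

lemma tendsto_ae_of_seqOrderConv (hQ : Q ∈ PC 𝔓)
    {X : ℕ → Ω → ℝ} {x : Ω → ℝ} (hX : ∀ n, Measurable (X n)) (hx : Measurable x)
    (h : SeqOrderConv 𝔓 X x) :
    ∀ᵐ ω ∂Q, Tendsto (fun n => X n ω) atTop (nhds (x ω)) := by
  obtain ⟨Y, hYm, hYmono, hYinf, hYdom⟩ := h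
  obtain ⟨H, hHm, hHpos, hHle, hHtend, _⟩ := exists_H hYm hYinf.1
  have hH0 : QSLe 𝔓 H (fun _ => 0) := hYinf.2 H hHm hHle
  have hH0Q : H ≤ᵐ[Q] fun _ => 0 := qsLe_ae hQ hHm measurable_const hH0
  have hposQ : ∀ᵐ ω ∂Q, ∀ n, 0 ≤ Y n ω :=
    ae_all_iff.mpr fun n => qsLe_ae hQ measurable_const (hYm n) (hYinf.1 n)
  have hmonoQ : ∀ᵐ ω ∂Q, ∀ p : ℕ × ℕ, p.1 ≤ p.2 → Y p.2 ω ≤ Y p.1 ω := by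
    rw [ae_all_iff]
    rintro ⟨m, n⟩
    by_cases hmn : m ≤ n
    · filter_upwards [qsLe_ae hQ (hYm n) (hYm m) (hYmono m n hmn)] with ω hω _ using hω
    · filter_upwards with ω hc using absurd hc hmn
  have hdomQ : ∀ᵐ ω ∂Q, ∀ n, |X n ω - x ω| ≤ Y n ω :=
    ae_all_iff.mpr fun n =>
      qsLe_ae hQ ((hX n).sub hx).abs (hYm n) (hYdom n)
  filter_upwards [hH0Q, hposQ, hmonoQ, hdomQ] with ω h1 h2 h3 h4
  have hanti : Antitone fun n => Y n ω := fun m n hmn => h3 (m, n) hmn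
  have hY0 : Tendsto (fun n => Y n ω) atTop (nhds 0) := hHtend ω h2 hanti h1
  rw [← tendsto_sub_nhds_zero_iff]
  exact squeeze_zero_norm (fun n => h4 n) hY0

lemma seqOrderConv_singleton (hQ : Q ∈ PC 𝔓)
    {X : ℕ → Ω → ℝ} {x : Ω → ℝ} (hX : ∀ n, Measurable (X n)) (hx : Measurable x)
    (h : SeqOrderConv 𝔓 X x) : SeqOrderConv {Q} X x := by
  obtain ⟨Y, hYm, hYmono, hYinf, hYdom⟩ := h
  obtain ⟨H, hHm, hHpos, hHle, _, hHmin⟩ := exists_H hYm hYinf.1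
  have hH0 : QSLe 𝔓 H (fun _ => 0) := hYinf.2 H hHm hHle
  have hH0Q : H ≤ᵐ[Q] fun _ => 0 := qsLe_ae hQ hHm measurable_const hH0
  refine ⟨Y, hYm, ?_, ⟨?_, ?_⟩, ?_⟩
  · intro m n hmn
    exact qsLe_singleton.mpr (qsLe_ae hQ (hYm n) (hYm m) (hYmono m n hmn))
  · intro n
    exact qsLe_singleton.mpr (qsLe_ae hQ measurable_const (hYm n) (hYinf.1 n))
  · intro g hgm hg
    refine qsLe_singleton.mpr ?_
    exact hHmin Q g (fun n => qsLe_singleton.mp (hg n)) hH0Q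
  · intro n
    exact qsLe_singleton.mpr
      (qsLe_ae hQ ((hX n).sub hx).abs (hYm n) (hYdom n))

/-- (4) implies (5). -/
lemma orderClosed_of_qClosed {Q : Measure Ω} (hQprob : IsProbabilityMeasure Q)
    {D : Set (Ω → ℝ)} (hDm : ∀ f ∈ D, Measurable f) (h4 : QClosedSet {Q} D) :
    OrderClosed {Q} D := by
  classical
  intro ι _ _ _ X x hXD hx hconv
  obtain ⟨Y, hYm, hYmono, hYinf, hYdom⟩ := hconv
  have hXm : ∀ a, Measurable (X a) := fun a => hDm _ (hXD a)
  have hYpos : ∀ a, (fun _ => (0:ℝ)) ≤ᵐ[Q] Y a := fun a => qsLe_singleton.mp (hYinf.1 a)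
  have hYmono' : ∀ a b : ι, a ≤ b → Y b ≤ᵐ[Q] Y a := fun a b hab =>
    qsLe_singleton.mp (hYmono a b hab)
  set W : ι → Ω → ℝ≥0∞ := fun a ω => min (ENNReal.ofReal (Y a ω)) 1 with hW
  have hWm : ∀ a, Measurable (W a) := fun a => ((hYm a).ennreal_ofReal).min measurable_const
  have hWle1 : ∀ a ω, W a ω ≤ 1 := fun a ω => min_le_right _ _
  have hWint : ∀ a, ∫⁻ ω, W a ω ∂Q ≤ 1 := by
    intro a
    calc ∫⁻ ω, W a ω ∂Q ≤ ∫⁻ _, 1 ∂Q := lintegral_mono fun ω => hWle1 a ω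
      _ = 1 := by simp [measure_univ]
  have hfin : ∀ f : Ω → ℝ≥0∞, (∀ ω, f ω ≤ 1) → ∫⁻ ω, f ω ∂Q ≠ ∞ := by
    intro f hf
    refine ne_top_of_le_ne_top ENNReal.one_ne_top ?_
    calc ∫⁻ ω, f ω ∂Q ≤ ∫⁻ _, 1 ∂Q := lintegral_mono hf
      _ = 1 := by simp [measure_univ]
  have hWmono_ae : ∀ {c d : ι}, c ≤ d → W d ≤ᵐ[Q] W c := by
    intro c d hcd
    filter_upwards [hYmono' c d hcd] with ω hω
    exact min_le_min (ENNReal.ofReal_le_ofReal hω) le_rfl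
  set m : ℝ≥0∞ := ⨅ a, ∫⁻ ω, W a ω ∂Q with hm
  have hm1 : m ≤ 1 := (iInf_le _ (Classical.arbitrary ι)).trans (hWint _)
  have hmtop : m ≠ ∞ := ne_top_of_le_ne_top ENNReal.one_ne_top hm1
  -- choose an approximating sequence
  have haseq : ∀ n : ℕ, ∃ a : ι, ∫⁻ ω, W a ω ∂Q < m + ((n : ℝ≥0∞) + 1)⁻¹ := by
    intro n
    refine iInf_lt_iff.mp ?_
    exact ENNReal.lt_add_right hmtop (by simp)
  choose aseq haseq using haseq
  have hdir : ∀ c d : ι, ∃ e, c ≤ e ∧ d ≤ e := fun c d => directed_of (· ≤ ·) c d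
  -- a monotone sequence dominating aseq
  let b : ℕ → ι := fun n => Nat.rec (aseq 0)
    (fun n bn => Classical.choose (hdir bn (aseq (n + 1)))) n
  have hbsucc : ∀ n, b n ≤ b (n + 1) ∧ aseq (n + 1) ≤ b (n + 1) := fun n =>
    Classical.choose_spec (hdir (b n) (aseq (n + 1)))
  have hbmono : Monotone b := monotone_nat_of_le_succ fun n => (hbsucc n).1
  have hab : ∀ n, aseq n ≤ b n := by
    intro n
    cases n with
    | zero => exact le_rfl
    | succ k => exact (hbsucc k).2
  have hWb_lt : ∀ n, ∫⁻ ω, W (b n) ω ∂Q < m + ((n : ℝ≥0∞) + 1)⁻¹ := fun n =>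
    (lintegral_mono_ae (hWmono_ae (hab n))).trans_lt (haseq n)
  have hWb_ge : ∀ n, m ≤ ∫⁻ ω, W (b n) ω ∂Q := fun n => iInf_le _ _
  set h' : Ω → ℝ≥0∞ := fun ω => ⨅ n, W (b n) ω with hh'
  have h'm : Measurable h' := Measurable.iInf fun n => hWm _
  have hanti_ae : ∀ᵐ ω ∂Q, Antitone fun n => W (b n) ω := by
    have : ∀ᵐ ω ∂Q, ∀ n, W (b (n + 1)) ω ≤ W (b n) ω :=
      ae_all_iff.mpr fun n => hWmono_ae (hbsucc n).1
    filter_upwards [this] with ω hω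
    exact antitone_nat_of_succ_le hω
  have hlint_h' : ∫⁻ ω, h' ω ∂Q = m := by
    rw [hh']
    rw [lintegral_iInf' (fun n => (hWm (b n)).aemeasurable) hanti_ae
      (ne_top_of_le_ne_top ENNReal.one_ne_top (hWint (b 0)))]
    refine le_antisymm ?_ (le_iInf fun n => hWb_ge n)
    refine ENNReal.le_of_forall_pos_le_add fun ε hε _ => ?_
    obtain ⟨k, hk⟩ := ENNReal.exists_inv_nat_lt (by exact_mod_cast hε.ne' : (ε : ℝ≥0∞) ≠ 0)
    refine (iInf_le _ k).trans ((hWb_lt k).le.trans ?_)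
    gcongr
    refine le_trans ?_ hk.le
    gcongr
    simp
  -- h' is a.e. below every W a
  have hkey : ∀ a : ι, h' ≤ᵐ[Q] W a := by
    intro a
    have hc : ∀ n : ℕ, ∃ e, b n ≤ e ∧ a ≤ e := fun n => hdir (b n) a
    choose c hc1 hc2 using hc
    set G : ℕ → Ω → ℝ≥0∞ := fun n ω => min (W (b n) ω) (W a ω) with hG
    have hGm : ∀ n, Measurable (G n) := fun n => (hWm _).min (hWm a)
    have hGanti : ∀ᵐ ω ∂Q, Antitone fun n => G n ω := by
      filter_upwards [hanti_ae] with ω hω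
      exact fun p q hpq => min_le_min (hω hpq) le_rfl
    have hGge : ∀ n, m ≤ ∫⁻ ω, G n ω ∂Q := by
      intro n
      refine le_trans (iInf_le _ (c n)) (lintegral_mono_ae ?_)
      filter_upwards [hWmono_ae (hc1 n), hWmono_ae (hc2 n)] with ω h1 h2
      exact le_min h1 h2
    have hGiInf : ∀ ω, (⨅ n, G n ω) = min (h' ω) (W a ω) := by
      intro ω
      refine le_antisymm (le_min (le_iInf fun n => (iInf_le _ n).trans (min_le_left _ _))
        ((iInf_le _ 0).trans (min_le_right _ _))) (le_iInf fun n => ?_)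
      exact min_le_min (iInf_le _ n) le_rfl
    have hlintG : m ≤ ∫⁻ ω, min (h' ω) (W a ω) ∂Q := by
      have := lintegral_iInf' (fun n => (hGm n).aemeasurable) hGanti
        (hfin _ fun ω => (min_le_right _ _).trans (hWle1 a ω))
      calc m ≤ ⨅ n, ∫⁻ ω, G n ω ∂Q := le_iInf hGge
        _ = ∫⁻ ω, ⨅ n, G n ω ∂Q := this.symm
        _ = ∫⁻ ω, min (h' ω) (W a ω) ∂Q := by
            congr 1; exact funext fun ω => hGiInf ω
    have heq : (fun ω => min (h' ω) (W a ω)) =ᵐ[Q] h' := by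
      refine ae_eq_of_ae_le_of_lintegral_le (ae_of_all _ fun ω => min_le_left _ _) ?_
        h'm.aemeasurable ?_
      · exact hfin _ fun ω => (min_le_left _ _).trans ((iInf_le _ 0).trans (hWle1 _ ω))
      · rw [hlint_h']; exact hlintG
    filter_upwards [heq] with ω hω
    rw [← hω]
    exact min_le_right _ _
  -- conclude h' = 0 a.e. using the infimum property
  have h'le1 : ∀ ω, h' ω ≤ 1 := fun ω => (iInf_le _ 0).trans (hWle1 _ ω)
  have h'top : ∀ ω, h' ω ≠ ∞ := fun ω => ne_top_of_le_ne_top ENNReal.one_ne_top (h'le1 ω)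
  set H : Ω → ℝ := fun ω => (h' ω).toReal with hH
  have hHm : Measurable H := h'm.ennreal_toReal
  have hHY : ∀ a : ι, H ≤ᵐ[Q] Y a := by
    intro a
    filter_upwards [hkey a, hYpos a] with ω h1 h2
    calc H ω ≤ (W a ω).toReal :=
          ENNReal.toReal_mono (ne_top_of_le_ne_top ENNReal.one_ne_top (hWle1 a ω)) h1
      _ ≤ (ENNReal.ofReal (Y a ω)).toReal :=
          ENNReal.toReal_mono ENNReal.ofReal_ne_top (min_le_left _ _)
      _ = Y a ω := ENNReal.toReal_ofReal h2
  have hH0 : H ≤ᵐ[Q] fun _ => 0 :=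
    qsLe_singleton.mp (hYinf.2 H hHm fun a => qsLe_singleton.mpr (hHY a))
  have h'0 : ∀ᵐ ω ∂Q, h' ω = 0 := by
    filter_upwards [hH0] with ω hω
    have : (h' ω).toReal = 0 := le_antisymm hω ENNReal.toReal_nonneg
    exact ((ENNReal.toReal_eq_zero_iff _).mp this).resolve_right (h'top ω)
  -- a.e. convergence of X (b n) to x
  have hXae : ∀ᵐ ω ∂Q, Tendsto (fun n => X (b n) ω) atTop (nhds (x ω)) := by
    have hdomb : ∀ᵐ ω ∂Q, ∀ n : ℕ, |X (b n) ω - x ω| ≤ Y (b n) ω :=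
      ae_all_iff.mpr fun n => qsLe_singleton.mp (hYdom (b n))
    have hposb : ∀ᵐ ω ∂Q, ∀ n : ℕ, 0 ≤ Y (b n) ω :=
      ae_all_iff.mpr fun n => hYpos (b n)
    filter_upwards [h'0, hanti_ae, hdomb, hposb] with ω h0 hanti hdom hpos
    have hWtend : Tendsto (fun n => W (b n) ω) atTop (nhds 0) := by
      have := tendsto_atTop_iInf hanti
      have he : (⨅ n, W (b n) ω) = 0 := h0
      rwa [he] at this
    have hev : ∀ᶠ n in atTop, ENNReal.ofReal (Y (b n) ω) = W (b n) ω := by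
      filter_upwards [hWtend.eventually (gt_mem_nhds zero_lt_one)] with n hn
      have hWn : W (b n) ω = min (ENNReal.ofReal (Y (b n) ω)) 1 := rfl
      rw [hWn] at hn
      rcases min_cases (ENNReal.ofReal (Y (b n) ω)) 1 with ⟨he, _⟩ | ⟨he, _⟩
      · rw [hWn, he]
      · rw [he] at hn; exact absurd hn (lt_irrefl _)
    have hotend : Tendsto (fun n => ENNReal.ofReal (Y (b n) ω)) atTop (nhds 0) :=
      hWtend.congr' (hev.mono fun n hn => hn.symm)
    have hYtend : Tendsto (fun n => Y (b n) ω) atTop (nhds 0) := by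
      have := (ENNReal.tendsto_toReal ENNReal.zero_ne_top).comp hotend
      simp only [Function.comp_def, ENNReal.toReal_zero] at this
      exact this.congr fun n => ENNReal.toReal_ofReal (hpos n)
    rw [← tendsto_sub_nhds_zero_iff]
    exact squeeze_zero_norm (fun n => hdom n) hYtend
  -- conclude by Q-closedness
  have htim : TendstoInMeasure Q (fun n => X (b n)) atTop x :=
    tendstoInMeasure_of_tendsto_ae (fun n => (hXm (b n)).aestronglyMeasurable) hXae
  refine h4 (fun n => X (b n)) x (fun n => hXD (b n)) hx ?_
  intro Q' hQ'
  rw [mem_singleton_iff] at hQ'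
  subst hQ'
  exact htim

/-- Everywhere-pointwise convergence implies membership for sequentially order closed sets. -/
lemma mem_of_ptwise_conv {𝒞 : Set (Ω → ℝ)} (h1 : SeqOrderClosed 𝔓 𝒞)
    {ψ : ℕ → Ω → ℝ} {y : Ω → ℝ} (hψm : ∀ n, Measurable (ψ n)) (hψC : ∀ n, ψ n ∈ 𝒞)
    (hym : Measurable y) (hconv : ∀ ω, Tendsto (fun n => ψ n ω) atTop (nhds (y ω))) :
    y ∈ 𝒞 := by
  classical
  set S : ℕ → Ω → ℝ≥0∞ := fun n ω => ⨆ k, ENNReal.ofReal |ψ (n + k) ω - y ω| with hS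
  have hSm : ∀ n, Measurable (S n) := fun n =>
    Measurable.iSup fun k => ((hψm (n + k)).sub hym).abs.ennreal_ofReal
  have hSfin : ∀ n ω, S n ω ≠ ∞ := by
    intro n ω
    have hb : BddAbove (Set.range fun i => |ψ i ω - y ω|) := by
      have ht : Tendsto (fun i => |ψ i ω - y ω|) atTop (nhds 0) := by
        have := tendsto_sub_nhds_zero_iff.mpr (hconv ω)
        simpa using this.abs
      exact ht.bddAbove_range
    obtain ⟨M, hM⟩ := hb
    refine ne_top_of_le_ne_top (ENNReal.ofReal_ne_top : ENNReal.ofReal M ≠ ∞)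
      (iSup_le fun k => ?_)
    exact ENNReal.ofReal_le_ofReal (hM (Set.mem_range_self (n + k)))
  set Yseq : ℕ → Ω → ℝ := fun n ω => (S n ω).toReal with hY
  have hYm : ∀ n, Measurable (Yseq n) := fun n => (hSm n).ennreal_toReal
  have hSanti : ∀ ω, Antitone fun n => S n ω := by
    intro ω
    refine antitone_nat_of_succ_le fun n => iSup_le fun k => ?_
    have : n + 1 + k = n + (k + 1) := by omega
    rw [this]
    exact le_iSup (fun k => ENNReal.ofReal |ψ (n + k) ω - y ω|) (k + 1)
  have hYtend : ∀ ω, Tendsto (fun n => Yseq n ω) atTop (nhds 0) := by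
    intro ω
    rw [Metric.tendsto_atTop]
    intro ε hε
    obtain ⟨N, hN⟩ := Metric.tendsto_atTop.mp (hconv ω) (ε / 2) (by linarith)
    refine ⟨N, fun n hn => ?_⟩
    have hle : S n ω ≤ ENNReal.ofReal (ε / 2) := by
      refine iSup_le fun k => ENNReal.ofReal_le_ofReal ?_
      have := hN (n + k) (by omega)
      rw [Real.dist_eq] at this
      exact this.le
    have h1 : Yseq n ω ≤ ε / 2 := by
      calc Yseq n ω ≤ (ENNReal.ofReal (ε / 2)).toReal :=
            ENNReal.toReal_mono ENNReal.ofReal_ne_top hle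
        _ = ε / 2 := ENNReal.toReal_ofReal (by linarith)
    have h0 : 0 ≤ Yseq n ω := ENNReal.toReal_nonneg
    rw [Real.dist_eq]
    rw [abs_sub_comm, abs_of_nonpos (by linarith)]
    simp only [neg_sub, sub_zero]
    linarith
  refine h1 ψ y hψC hym ⟨Yseq, hYm, ?_, ⟨?_, ?_⟩, ?_⟩
  · intro m n hmn
    refine qsLe_of_forall fun ω => ?_
    exact ENNReal.toReal_mono (hSfin m ω) (hSanti ω hmn)
  · intro n
    exact qsLe_of_forall fun ω => ENNReal.toReal_nonneg
  · intro g hgm hg P hP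
    have : ∀ᵐ ω ∂P, ∀ n, g ω ≤ Yseq n ω := ae_all_iff.mpr fun n => hg n P hP
    filter_upwards [this] with ω hω
    exact ge_of_tendsto (hYtend ω) (Filter.Eventually.of_forall hω)
  · intro n
    refine qsLe_of_forall fun ω => ?_
    have h1 : ENNReal.ofReal |ψ n ω - y ω| ≤ S n ω := by
      have := le_iSup (fun k => ENNReal.ofReal |ψ (n + k) ω - y ω|) 0
      simpa using this
    calc |ψ n ω - y ω| = (ENNReal.ofReal |ψ n ω - y ω|).toReal :=
          (ENNReal.toReal_ofReal (abs_nonneg _)).symm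
      _ ≤ Yseq n ω := ENNReal.toReal_mono (hSfin n ω) h1

/-- (1) implies (3): sequential order closedness gives local `Q`-closedness. -/
lemma locallyQClosed_of_seqOrderClosed {𝒞 : Set (Ω → ℝ)}
    (h𝒞 : IsL0Set 𝔓 𝒞) (hsolid : Solid 𝔓 𝒞) (h1 : SeqOrderClosed 𝔓 𝒞)
    (hQ : Q ∈ PC 𝔓) : LocallyQClosed Q 𝒞 := by
  classical
  intro X x hXC hx htim
  have hXm : ∀ n, Measurable (X n) := fun n => h𝒞.1 (hXC n)
  obtain ⟨ns, -, hae⟩ := htim.exists_seq_tendsto_ae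
  set X' : ℕ → Ω → ℝ := fun i => X (ns i) with hX'
  have hX'C : ∀ i, X' i ∈ 𝒞 := fun i => hXC (ns i)
  have hX'm : ∀ i, Measurable (X' i) := fun i => hXm (ns i)
  rcases hsolid with hs | ⟨hsub, hs⟩
  · -- solid in `L⁰_c`
    set φ : ℕ → Ω → ℝ := fun i ω => max (min (x ω) |X' i ω|) (-|X' i ω|) with hφ
    have hφm : ∀ i, Measurable (φ i) := fun i =>
      (hx.min (hX'm i).abs).max (hX'm i).abs.neg
    have habs : ∀ i ω, |φ i ω| ≤ |X' i ω| := by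
      intro i ω
      rw [abs_le]
      constructor
      · exact le_max_right _ _
      · exact max_le ((min_le_right _ _)) (neg_le_self (abs_nonneg _))
    have hφC : ∀ i, φ i ∈ 𝒞 := fun i =>
      hs (X' i) (hX'C i) (φ i) (hφm i) (qsLe_of_forall fun ω => habs i ω)
    set A : Set Ω := {ω | ∃ c, Tendsto (fun i => φ i ω) atTop (nhds c)} with hA
    have hAm : MeasurableSet A := measurableSet_exists_tendsto fun i => hφm i
    set ψ : ℕ → Ω → ℝ := fun i => A.indicator (φ i) with hψ
    have hψm : ∀ i, Measurable (ψ i) := fun i => (hφm i).indicator hAm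
    have hψle : ∀ i ω, |ψ i ω| ≤ |φ i ω| := by
      intro i ω
      by_cases h : ω ∈ A
      · simp [hψ, Set.indicator_of_mem h]
      · simp [hψ, Set.indicator_of_notMem h, abs_nonneg]
    have hψC : ∀ i, ψ i ∈ 𝒞 := fun i =>
      hs (φ i) (hφC i) (ψ i) (hψm i) (qsLe_of_forall fun ω => hψle i ω)
    have hψconv : ∀ ω, ∃ c, Tendsto (fun i => ψ i ω) atTop (nhds c) := by
      intro ω
      by_cases h : ω ∈ A
      · have hcopy := h
        obtain ⟨c, hc⟩ := hcopy
        exact ⟨c, hc.congr fun i => (Set.indicator_of_mem h _).symm⟩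
      · exact ⟨0, tendsto_const_nhds.congr fun i => (Set.indicator_of_notMem h _).symm⟩
    set y : Ω → ℝ := fun ω => limUnder atTop fun i => ψ i ω with hy
    have hty : ∀ ω, Tendsto (fun i => ψ i ω) atTop (nhds (y ω)) := fun ω =>
      tendsto_nhds_limUnder (hψconv ω)
    have hym : Measurable y :=
      measurable_of_tendsto_metrizable (fun i => hψm i) (tendsto_pi_nhds.mpr hty)
    refine ⟨y, mem_of_ptwise_conv h1 hψm hψC hym hty, ?_⟩
    filter_upwards [hae] with ω hω
    have hφt : Tendsto (fun i => φ i ω) atTop (nhds (x ω)) := by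
      have habst : Tendsto (fun i => |X' i ω|) atTop (nhds |x ω|) := hω.abs
      have h1' : Tendsto (fun i => min (x ω) |X' i ω|) atTop (nhds (min (x ω) |x ω|)) :=
        tendsto_const_nhds.min habst
      have := h1'.max habst.neg
      rwa [min_eq_left (le_abs_self _), max_eq_left (neg_abs_le _)] at this
    have hωA : ω ∈ A := ⟨x ω, hφt⟩
    have : Tendsto (fun i => ψ i ω) atTop (nhds (x ω)) :=
      hφt.congr fun i => (Set.indicator_of_mem hωA _).symm
    exact tendsto_nhds_unique this (hty ω)
  · -- solid in `L⁰_{c+}`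
    set φ : ℕ → Ω → ℝ := fun i ω => min (max (x ω) 0) (max (X' i ω) 0) with hφ
    have hφm : ∀ i, Measurable (φ i) := fun i =>
      (hx.max measurable_const).min ((hX'm i).max measurable_const)
    have hφpos : ∀ i ω, 0 ≤ φ i ω := fun i ω =>
      le_min (le_max_right _ _) (le_max_right _ _)
    have hφle : ∀ i, QSLe 𝔓 (φ i) (X' i) := by
      intro i P hP
      filter_upwards [(hsub (hX'C i)).2 P hP] with ω hω
      calc φ i ω ≤ max (X' i ω) 0 := min_le_right _ _
        _ = X' i ω := max_eq_left hω
    have hφC : ∀ i, φ i ∈ 𝒞 := fun i =>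
      hs (X' i) (hX'C i) (φ i) ⟨hφm i, qsLe_of_forall fun ω => hφpos i ω⟩ (hφle i)
    set A : Set Ω := {ω | ∃ c, Tendsto (fun i => φ i ω) atTop (nhds c)} with hA
    have hAm : MeasurableSet A := measurableSet_exists_tendsto fun i => hφm i
    set ψ : ℕ → Ω → ℝ := fun i => A.indicator (φ i) with hψ
    have hψm : ∀ i, Measurable (ψ i) := fun i => (hφm i).indicator hAm
    have hψpos : ∀ i ω, 0 ≤ ψ i ω := fun i ω =>
      Set.indicator_nonneg (fun ω _ => hφpos i ω) ω
    have hψle : ∀ i ω, ψ i ω ≤ φ i ω := fun i ω =>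
      Set.indicator_le_self' (fun ω _ => hφpos i ω) ω
    have hψC : ∀ i, ψ i ∈ 𝒞 := fun i =>
      hs (φ i) (hφC i) (ψ i) ⟨hψm i, qsLe_of_forall fun ω => hψpos i ω⟩
        (qsLe_of_forall fun ω => hψle i ω)
    have hψconv : ∀ ω, ∃ c, Tendsto (fun i => ψ i ω) atTop (nhds c) := by
      intro ω
      by_cases h : ω ∈ A
      · have hcopy := h
        obtain ⟨c, hc⟩ := hcopy
        exact ⟨c, hc.congr fun i => (Set.indicator_of_mem h _).symm⟩
      · exact ⟨0, tendsto_const_nhds.congr fun i => (Set.indicator_of_notMem h _).symm⟩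
    set y : Ω → ℝ := fun ω => limUnder atTop fun i => ψ i ω with hy
    have hty : ∀ ω, Tendsto (fun i => ψ i ω) atTop (nhds (y ω)) := fun ω =>
      tendsto_nhds_limUnder (hψconv ω)
    have hym : Measurable y :=
      measurable_of_tendsto_metrizable (fun i => hψm i) (tendsto_pi_nhds.mpr hty)
    refine ⟨y, mem_of_ptwise_conv h1 hψm hψC hym hty, ?_⟩
    have hposae : ∀ᵐ ω ∂Q, ∀ i, 0 ≤ X' i ω :=
      ae_all_iff.mpr fun i =>
        qsLe_ae hQ measurable_const (hX'm i) (hsub (hX'C i)).2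
    filter_upwards [hae, hposae] with ω hω hpos
    have hxpos : 0 ≤ x ω := ge_of_tendsto hω (Filter.Eventually.of_forall hpos)
    have hφt : Tendsto (fun i => φ i ω) atTop (nhds (x ω)) := by
      have h1' : Tendsto (fun i => max (X' i ω) 0) atTop (nhds (max (x ω) 0)) :=
        hω.max tendsto_const_nhds
      have h2' : Tendsto (fun i => min (max (x ω) 0) (max (X' i ω) 0)) atTop
          (nhds (min (max (x ω) 0) (max (x ω) 0))) := tendsto_const_nhds.min h1'
      have h3' : min (max (x ω) 0) (max (x ω) 0) = x ω := by
        rw [min_self, max_eq_left hxpos]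
      exact h3' ▸ h2'
    have hωA : ω ∈ A := ⟨x ω, hφt⟩
    have : Tendsto (fun i => ψ i ω) atTop (nhds (x ω)) :=
      hφt.congr fun i => (Set.indicator_of_mem hωA _).symm
    exact tendsto_nhds_unique this (hty ω)

/-- Order closedness (for nets, at any universe) implies sequential order closedness. -/
lemma seqOrderClosed_of_orderClosed {D : Set (Ω → ℝ)}
    (h : OrderClosed.{_, u} 𝔓 D) : SeqOrderClosed 𝔓 D := by
  intro X x hX hx hconv
  obtain ⟨Y, hYm, hYmono, hYinf, hYdom⟩ := hconv
  haveI : IsDirected (ULift.{u} ℕ) (· ≤ ·) :=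
    ⟨fun a b => ⟨⟨max a.down b.down⟩, le_max_left _ _, le_max_right _ _⟩⟩
  refine h (ULift.{u} ℕ) (fun a => X a.down) x (fun a => hX a.down) hx
    ⟨fun a => Y a.down, fun a => hYm a.down,
     fun a b hab => hYmono a.down b.down hab,
     ⟨fun a => hYinf.1 a.down, fun g hg hgle => hYinf.2 g hg fun n => hgle ⟨n⟩⟩,
     fun a => hYdom a.down⟩

end Aux


/-- Equivalent notions of closedness for solid `𝒫`-sensitive sets. -/
theorem stmt8 {Ω : Type*} [MeasurableSpace Ω]
    (𝔓 : Set (Measure Ω)) (h𝔓ne : 𝔓.Nonempty)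
    (h𝔓prob : ∀ P ∈ 𝔓, IsProbabilityMeasure P)
    (𝒞 : Set (Ω → ℝ)) (h𝒞 : IsL0Set 𝔓 𝒞) (hsolid : Solid 𝔓 𝒞)
    (𝒬 : Set (Measure Ω)) (hred : IsReductionSet 𝔓 𝒬 𝒞) :
    (SeqOrderClosed 𝔓 𝒞 ↔ QClosedSet 𝒬 𝒞) ∧
    (SeqOrderClosed 𝔓 𝒞 ↔ ∀ Q ∈ 𝒬, LocallyQClosed Q 𝒞) ∧
    (SeqOrderClosed 𝔓 𝒞 ↔ ∀ Q ∈ 𝒬, QClosedSet {Q} (jSat Q 𝒞)) ∧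
    (SeqOrderClosed 𝔓 𝒞 ↔ ∀ Q ∈ 𝒬, OrderClosed {Q} (jSat Q 𝒞)) ∧
    (SeqOrderClosed 𝔓 𝒞 ↔ ∀ Q ∈ 𝒬, SeqOrderClosed {Q} (jSat Q 𝒞)) := by
  classical
  obtain ⟨h𝒬ne, h𝒬PC, h𝒬red⟩ := hred
  have hmem : ∀ f ∈ 𝒞, Measurable f := fun f hf => h𝒞.1 hf
  have hjmem : ∀ Q, ∀ f ∈ 𝒞, f ∈ jSat Q 𝒞 := fun Q f hf =>
    ⟨hmem f hf, f, hf, EventuallyEq.rfl⟩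
  have h13 : SeqOrderClosed 𝔓 𝒞 → ∀ Q ∈ 𝒬, LocallyQClosed Q 𝒞 := fun h1 Q hQ =>
    locallyQClosed_of_seqOrderClosed h𝒞 hsolid h1 (h𝒬PC hQ)
  have h34 : (∀ Q ∈ 𝒬, LocallyQClosed Q 𝒞) → ∀ Q ∈ 𝒬, QClosedSet {Q} (jSat Q 𝒞) := by
    intro h3 Q hQ F x hF hx hconv
    choose g hgC hFg using fun n => (hF n).2
    have htim : TendstoInMeasure Q F atTop x := hconv Q rfl
    have htim' : TendstoInMeasure Q g atTop x :=
      htim.congr (fun i => hFg i) EventuallyEq.rfl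
    obtain ⟨y, hyC, hxy⟩ := h3 Q hQ g x hgC hx htim'
    exact ⟨hx, y, hyC, hxy⟩
  have h61 : (∀ Q ∈ 𝒬, SeqOrderClosed {Q} (jSat Q 𝒞)) → SeqOrderClosed 𝔓 𝒞 := by
    intro h6 X x hX hx hconv
    rw [h𝒬red]
    refine mem_iInter₂.mpr fun Q hQ => ?_
    exact h6 Q hQ X x (fun n => hjmem Q _ (hX n)) hx
      (seqOrderConv_singleton (h𝒬PC hQ) (fun n => hmem _ (hX n)) hx hconv)
  have h42 : (∀ Q ∈ 𝒬, QClosedSet {Q} (jSat Q 𝒞)) → QClosedSet 𝒬 𝒞 := by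
    intro h4 X x hX hx hconv
    rw [h𝒬red]
    refine mem_iInter₂.mpr fun Q hQ => ?_
    refine h4 Q hQ X x (fun n => hjmem Q _ (hX n)) hx ?_
    intro Q' hQ'
    rw [mem_singleton_iff] at hQ'
    rw [hQ']
    exact hconv Q hQ
  have h21 : QClosedSet 𝒬 𝒞 → SeqOrderClosed 𝔓 𝒞 := by
    intro h2 X x hX hx hconv
    refine h2 X x hX hx fun Q hQ => ?_
    haveI := (h𝒬PC hQ).1
    exact tendstoInMeasure_of_tendsto_ae
      (fun n => (hmem _ (hX n)).aestronglyMeasurable)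
      (tendsto_ae_of_seqOrderConv (h𝒬PC hQ) (fun n => hmem _ (hX n)) hx hconv)
  have c14 : SeqOrderClosed 𝔓 𝒞 → ∀ Q ∈ 𝒬, QClosedSet {Q} (jSat Q 𝒞) :=
    fun h => h34 (h13 h)
  refine ⟨⟨fun h => h42 (c14 h), h21⟩,
    ⟨h13, fun h3 => ?_⟩, ⟨c14, fun h4 => ?_⟩, ⟨fun h1 Q hQ => ?_, fun h5 => ?_⟩,
    ⟨fun h1 Q hQ => ?_, h61⟩⟩
  · exact h21 (h42 (h34 h3))
  · exact h21 (h42 h4)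
  · exact orderClosed_of_qClosed (h𝒬PC hQ).1 (fun f hf => hf.1) (c14 h1 Q hQ)
  · exact h61 fun Q hQ => seqOrderClosed_of_orderClosed (h5 Q hQ)
  · have ho : OrderClosed.{_, 0} {Q} (jSat Q 𝒞) :=
      orderClosed_of_qClosed (h𝒬PC hQ).1 (fun f hf => hf.1) (c14 h1 Q hQ)
    exact seqOrderClosed_of_orderClosed ho
end Robust
end

section
/- Let 𝒬 ⊂ 𝔓_c(Ω) be non-empty, let † be one of the quantifiers ∃ or ∀, and suppose 𝒞 = ⋂_{Q∈𝒬} {X ∈ L⁰_c : † H ∈ ℋ : Q(A^H_Q(X)) = 1}, where ℋ is a non-empty index set and for each Q ∈ 𝒬 and H ∈ ℋ the map A^H_Q : L⁰_c → ℱ satisfies Q(A^H_Q(X) △ A^H_Q(Y)) = 0 whenever Q(X = Y) = 1. Then 𝒞 is 𝒫-sensitive with reduction set 𝒬. -/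
open MeasureTheory Filter Set
open scoped ENNReal

namespace Robust

variable {Ω : Type*} [MeasurableSpace Ω]

/-- `𝒫`-sensitivity from local defining conditions
(with quantifier `† ∈ {∃, ∀}`). -/
theorem stmt12 {Ω : Type*} [MeasurableSpace Ω]
    (𝔓 : Set (Measure Ω)) (h𝔓ne : 𝔓.Nonempty)
    (h𝔓prob : ∀ P ∈ 𝔓, IsProbabilityMeasure P)
    (𝒬 : Set (Measure Ω)) (h𝒬ne : 𝒬.Nonempty) (h𝒬 : 𝒬 ⊆ PC 𝔓)
    (H : Type*) (hH : Nonempty H)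
    (A : Measure Ω → H → (Ω → ℝ) → Set Ω)
    (hAmeas : ∀ Q ∈ 𝒬, ∀ (h : H) (f : Ω → ℝ), MeasurableSet (A Q h f))
    (hAcong : ∀ Q ∈ 𝒬, ∀ (h : H) (f g : Ω → ℝ), Measurable f → Measurable g →
        f =ᵐ[Q] g → Q (symmDiff (A Q h f) (A Q h g)) = 0)
    (𝒞 : Set (Ω → ℝ))
    (h𝒞 : (𝒞 = ⋂ Q ∈ 𝒬, {f | Measurable f ∧ ∃ h : H, Q (A Q h f) = 1}) ∨
          (𝒞 = ⋂ Q ∈ 𝒬, {f | Measurable f ∧ ∀ h : H, Q (A Q h f) = 1})) :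
    IsReductionSet 𝔓 𝒬 𝒞 := by
  -- f ∈ 𝒞 implies f measurable
  have hmeas : ∀ f ∈ 𝒞, Measurable f := by
    intro f hf
    obtain ⟨Q0, hQ0⟩ := h𝒬ne
    rcases h𝒞 with h | h <;> subst h <;>
      simpa using (mem_iInter₂.mp hf Q0 hQ0).1
  refine ⟨h𝒬ne, h𝒬, ?_⟩
  apply Set.Subset.antisymm
  · intro f hf
    refine mem_iInter₂.mpr fun Q hQ => ⟨hmeas f hf, f, hf, Filter.EventuallyEq.rfl⟩
  · intro f hf
    have hfsat : ∀ Q ∈ 𝒬, f ∈ jSat Q 𝒞 := fun Q hQ => mem_iInter₂.mp hf Q hQ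
    obtain ⟨Q0, hQ0⟩ := h𝒬ne
    have hfm : Measurable f := (hfsat Q0 hQ0).1
    have key : ∀ Q ∈ 𝒬, ∀ h : H, ∀ g ∈ 𝒞, f =ᵐ[Q] g →
        Q (A Q h g) = 1 → Q (A Q h f) = 1 := by
      intro Q hQ h g hg hfg hQg
      have hsd := hAcong Q hQ h f g hfm (hmeas g hg) hfg
      have : Q (A Q h f) = Q (A Q h g) :=
        measure_congr ((MeasureTheory.measure_symmDiff_eq_zero_iff).mp hsd)
      rw [this]; exact hQg
    rcases h𝒞 with h | h <;> subst h
    · refine mem_iInter₂.mpr fun Q hQ => ?_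
      obtain ⟨_, g, hg, hfg⟩ := hfsat Q hQ
      obtain ⟨hgm, h0, hQg⟩ := mem_iInter₂.mp hg Q hQ
      exact ⟨hfm, h0, key Q hQ h0 g hg hfg hQg⟩
    · refine mem_iInter₂.mpr fun Q hQ => ?_
      obtain ⟨_, g, hg, hfg⟩ := hfsat Q hQ
      obtain ⟨hgm, hQg⟩ := mem_iInter₂.mp hg Q hQ
      exact ⟨hfm, fun h0 => key Q hQ h0 g hg hfg (hQg h0)⟩
end Robust
end
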